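/- arXiv:1706.05671 — 9 statements merged into one kernel-verified Lean document; each statement's English description precedes it below -/
import Mathlib

section
/- Suppose α > 3. Then the values converge rapidly: there exists a constant M ≥ 0 such that Φ(x(t)) − inf Φ ≤ M / t² for all t ≥ t₀, i.e. Φ(x(t)) − inf Φ = O(1/t²) as t → +∞. -/
open Set

local notation "⟪" a ", " b "⟫" => @inner ℝ _ _ a b

section aux
variable {H : Type*} [NormedAddCommGroup H] [InnerProductSpace ℝ H] [CompleteSpace H]

lemma grad_chain (Φ : H → ℝ) (hΦC1 : ContDiff ℝ 1 Φ) {c : ℝ → H} {c' : H} {t : ℝ}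
    (hc : HasDerivAt c c' t) :
    HasDerivAt (fun s => Φ (c s)) ⟪gradient Φ (c t), c'⟫ t := by
  have hd : DifferentiableAt ℝ Φ (c t) :=
    (hΦC1.differentiable one_ne_zero).differentiableAt
  have hg := hd.hasGradientAt
  have := hg.hasFDerivAt.comp_hasDerivAt t hc
  simp at this ⊢
  exact this

lemma grad_ineq (Φ : H → ℝ) (hconv : ConvexOn ℝ Set.univ Φ) (hΦC1 : ContDiff ℝ 1 Φ)
    (a b : H) : Φ a + ⟪gradient Φ a, b - a⟫ ≤ Φ b := by
  set g : ℝ → ℝ := fun s => Φ (a + s • (b - a)) with hgdef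
  have hline : ∀ s : ℝ, (AffineMap.lineMap a b : ℝ →ᵃ[ℝ] H) s = a + s • (b - a) := by
    intro s
    simp [AffineMap.lineMap_apply_module]
    module
  have hgconv : ConvexOn ℝ Set.univ g := by
    have h := hconv.comp_affineMap (AffineMap.lineMap a b : ℝ →ᵃ[ℝ] H)
    rw [Set.preimage_univ] at h
    suffices heq : g = Φ ∘ ⇑(AffineMap.lineMap a b : ℝ →ᵃ[ℝ] H) by rw [heq]; exact h
    funext s
    simp [hgdef, Function.comp, hline s]
  have hds : ∀ s : ℝ, HasDerivAt g ⟪gradient Φ (a + s • (b - a)), b - a⟫ s := by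
    intro s
    have hc : HasDerivAt (fun s : ℝ => a + s • (b - a)) (b - a) s := by
      simpa using ((hasDerivAt_id s).smul_const (b - a)).const_add a
    exact grad_chain Φ hΦC1 hc
  have h0 := hds 0
  have hslope := hgconv.deriv_le_slope (mem_univ (0:ℝ)) (mem_univ (1:ℝ)) zero_lt_one
    (h0.differentiableAt)
  rw [h0.deriv] at hslope
  have hg0 : g 0 = Φ a := by simp [hgdef]
  have hg1 : g 1 = Φ b := by simp [hgdef]
  rw [slope_def_field, hg0, hg1] at hslope
  simp only [zero_smul, add_zero] at hslope
  have : ⟪gradient Φ a, b - a⟫ ≤ Φ b - Φ a := by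
    simpa using hslope
  linarith

end aux

/-- for `α > 3`, the values converge at rate `O(1/t²)` along any
solution of `(AVD)_α : ẍ(t) + (α/t)ẋ(t) + ∇Φ(x(t)) = 0`. -/
theorem stmt_0
    {H : Type*} [NormedAddCommGroup H] [InnerProductSpace ℝ H] [CompleteSpace H]
    (Φ : H → ℝ) (hΦconv : ConvexOn ℝ Set.univ Φ) (hΦC1 : ContDiff ℝ 1 Φ)
    (xstar : H) (hxstar : ∀ y : H, Φ xstar ≤ Φ y)
    (α t₀ : ℝ) (hα : 3 < α) (ht₀ : 0 < t₀)
    (x : ℝ → H) (hx : ContDiff ℝ 2 x)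
    (hode : ∀ t : ℝ, t₀ ≤ t →
      deriv (deriv x) t + (α / t) • deriv x t + gradient Φ (x t) = 0) :
    ∃ M : ℝ, 0 ≤ M ∧ ∀ t : ℝ, t₀ ≤ t → Φ (x t) - Φ xstar ≤ M / t ^ 2 := by
  have hx2 : Differentiable ℝ x ∧ ContDiff ℝ 1 (deriv x) := by
    have := contDiff_succ_iff_deriv.mp (show ContDiff ℝ (1 + 1) x by norm_num [hx])
    exact ⟨this.1, this.2.2⟩
  have hdx : ∀ t : ℝ, HasDerivAt x (deriv x t) t :=
    fun t => (hx2.1 t).hasDerivAt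
  have hdx' : ∀ t : ℝ, HasDerivAt (deriv x) (deriv (deriv x) t) t :=
    fun t => ((hx2.2.differentiable one_ne_zero) t).hasDerivAt
  set x' : ℝ → H := deriv x with hx'def
  set x'' : ℝ → H := deriv (deriv x) with hx''def
  set w : ℝ → H := fun t => x t - xstar with hwdef
  set v : ℝ → H := fun t => (2:ℝ) • w t + t • x' t with hvdef
  set E : ℝ → ℝ := fun t =>
    t ^ 2 * (Φ (x t) - Φ xstar) + (1/2) * ⟪v t, v t⟫ + (α - 3) * ⟪w t, w t⟫ with hEdef
  set vd : ℝ → H := fun t => (2:ℝ) • x' t + (t • x'' t + (1:ℝ) • x' t) with hvddef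
  set e : ℝ → ℝ := fun t =>
    (2 * t * (Φ (x t) - Φ xstar) + t ^ 2 * ⟪gradient Φ (x t), x' t⟫)
    + (1/2) * (⟪v t, vd t⟫ + ⟪vd t, v t⟫)
    + (α - 3) * (⟪w t, x' t⟫ + ⟪x' t, w t⟫) with hedef
  have hE : ∀ t : ℝ, HasDerivAt E (e t) t := by
    intro t
    have hw : HasDerivAt w (x' t) t := (hdx t).sub_const xstar
    have hv : HasDerivAt v (vd t) t := by
      have h1 : HasDerivAt (fun s => (2:ℝ) • w s) ((2:ℝ) • x' t) t :=
        ((hdx t).sub_const xstar).const_smul (2:ℝ)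
      have h2 : HasDerivAt (fun s : ℝ => s • x' s) (t • x'' t + (1:ℝ) • x' t) t := by
        have := (hasDerivAt_id t).smul (hdx' t)
        simp at this ⊢
        exact this
      exact h1.add h2
    have hphi : HasDerivAt (fun s => Φ (x s)) ⟪gradient Φ (x t), x' t⟫ t :=
      grad_chain Φ hΦC1 (hdx t)
    have hterm1 : HasDerivAt (fun s => s ^ 2 * (Φ (x s) - Φ xstar))
        (2 * t * (Φ (x t) - Φ xstar) + t ^ 2 * ⟪gradient Φ (x t), x' t⟫) t := by
      have hsq : HasDerivAt (fun s : ℝ => s ^ 2) (2 * t) t := by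
        simpa using hasDerivAt_pow 2 t
      have := hsq.mul (hphi.sub_const (Φ xstar))
      simp at this ⊢
      exact this
    have hterm2 : HasDerivAt (fun s => (1/2 : ℝ) * ⟪v s, v s⟫)
        ((1/2) * (⟪v t, vd t⟫ + ⟪vd t, v t⟫)) t :=
      (hv.inner ℝ hv).const_mul (1/2 : ℝ)
    have hterm3 : HasDerivAt (fun s => (α - 3) * ⟪w s, w s⟫)
        ((α - 3) * (⟪w t, x' t⟫ + ⟪x' t, w t⟫)) t :=
      (hw.inner ℝ hw).const_mul (α - 3)
    exact (hterm1.add hterm2).add hterm3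
  have hle : ∀ t : ℝ, t₀ ≤ t → e t ≤ 0 := by
    intro t ht
    have htpos : (0:ℝ) < t := lt_of_lt_of_le ht₀ ht
    set G : H := gradient Φ (x t) with hG
    have htsmul : t • x'' t = -(t • G) - α • x' t := by
      have h0 := hode t ht
      rw [← hG] at h0
      have h1 : x'' t + (α / t) • x' t = -G := eq_neg_of_add_eq_zero_left h0
      have h2 : x'' t = -G - (α / t) • x' t := eq_sub_of_add_eq h1
      rw [h2, smul_sub, smul_neg, smul_smul, mul_div_cancel₀ α htpos.ne']
    have key : Φ (x t) - Φ xstar ≤ ⟪G, w t⟫ := by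
      have h3 := grad_ineq Φ hΦconv hΦC1 (x t) xstar
      have hw' : xstar - x t = -(w t) := by simp [hwdef]
      rw [← hG, hw', inner_neg_right] at h3
      linarith
    have hexp : e t = 2 * t * ((Φ (x t) - Φ xstar) - ⟪G, w t⟫)
        + (3 - α) * t * ⟪x' t, x' t⟫ := by
      rw [hedef]
      simp only [hvdef, hvddef, htsmul, ← hG]
      simp only [inner_add_left, inner_add_right, inner_sub_left, inner_sub_right,
        inner_neg_left, inner_neg_right, inner_smul_left, inner_smul_right,
        RCLike.conj_to_real, conj_trivial, one_smul,
        real_inner_comm (w t) G, real_inner_comm (x' t) G, real_inner_comm (w t) (x' t)]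
      ring
    rw [hexp]
    have h2 : (0:ℝ) ≤ ⟪x' t, x' t⟫ := real_inner_self_nonneg
    have ha : 2 * t * (Φ (x t) - Φ xstar - ⟪G, w t⟫) ≤ 0 :=
      mul_nonpos_of_nonneg_of_nonpos (by positivity) (by linarith)
    have hb : (3 - α) * t * ⟪x' t, x' t⟫ ≤ 0 :=
      mul_nonpos_of_nonpos_of_nonneg (by nlinarith) h2
    linarith
  have hanti : AntitoneOn E (Ici t₀) := by
    apply antitoneOn_of_deriv_nonpos (convex_Ici t₀)
    · exact fun t _ => ((hE t).differentiableAt.continuousAt).continuousWithinAt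
    · intro t ht
      exact (hE t).differentiableAt.differentiableWithinAt
    · intro t ht
      rw [(hE t).deriv]
      exact hle t (le_of_lt (by simpa [interior_Ici] using ht))
  have hFnn : ∀ t : ℝ, 0 ≤ Φ (x t) - Φ xstar := fun t => by linarith [hxstar (x t)]
  have hElow : ∀ t : ℝ, t ^ 2 * (Φ (x t) - Φ xstar) ≤ E t := by
    intro t
    have h1 : (0:ℝ) ≤ ⟪v t, v t⟫ := real_inner_self_nonneg
    have h2 : (0:ℝ) ≤ ⟪w t, w t⟫ := real_inner_self_nonneg
    have h3 : (0:ℝ) ≤ (α - 3) * ⟪w t, w t⟫ := by nlinarith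
    simp only [hEdef]
    linarith
  refine ⟨E t₀, ?_, ?_⟩
  · have := hElow t₀
    nlinarith [hFnn t₀, sq_nonneg t₀]
  · intro t ht
    have htpos : (0:ℝ) < t := lt_of_lt_of_le ht₀ ht
    have hEt : E t ≤ E t₀ := hanti self_mem_Ici ht ht
    have h4 := hElow t
    rw [le_div_iff₀ (by positivity : (0:ℝ) < t ^ 2)]
    nlinarith
end

section
/- (Integral estimate of the values.) (i) If α > 3, then ∫_{t₀}^{+∞} t·(Φ(x(t)) − inf Φ) dt < +∞. (ii) If α ≤ 3, then for every real p with p < (2α/3) − 1 one has ∫_{t₀}^{+∞} t^p·(Φ(x(t)) − inf Φ) dt < +∞; in particular, for α = 3, ∫_{t₀}^{+∞} t^p·(Φ(x(t)) − inf Φ) dt < +∞ for all p < 1. -/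
open Set MeasureTheory intervalIntegral

local notation "⟪" x ", " y "⟫" => @inner ℝ _ _ x y

lemma grad_ineq' {H : Type*} [NormedAddCommGroup H] [InnerProductSpace ℝ H] [CompleteSpace H]
    {Φ : H → ℝ} (hconv : ConvexOn ℝ Set.univ Φ) (hΦ : Differentiable ℝ Φ) (y z : H) :
    Φ y + ⟪gradient Φ y, z - y⟫ ≤ Φ z := by
  set ψ : ℝ → ℝ := fun s => Φ (y + s • (z - y)) with hψ
  have hcurve : HasDerivAt (fun s : ℝ => y + s • (z - y)) (z - y) 0 := by
    simpa using ((hasDerivAt_id (0:ℝ)).smul_const (z - y)).const_add y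
  have hψd : HasDerivAt ψ (⟪gradient Φ y, z - y⟫) 0 := by
    have h0 : y + (0:ℝ) • (z - y) = y := by simp
    have := (hΦ (y + (0:ℝ) • (z - y))).hasFDerivAt.comp_hasDerivAt 0 hcurve
    rw [h0] at this
    refine this.congr_deriv ?_
    rw [gradient, InnerProductSpace.toDual_symm_apply]
  have hslope : Filter.Tendsto (slope ψ 0) (nhdsWithin 0 (Set.Ioi 0)) (nhds (⟪gradient Φ y, z - y⟫)) :=
    (hasDerivAt_iff_tendsto_slope.mp hψd).mono_left
      (nhdsWithin_mono 0 (fun s hs => ne_of_gt hs))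
  have hev : ∀ᶠ s in nhdsWithin (0:ℝ) (Set.Ioi 0), slope ψ 0 s ≤ Φ z - Φ y := by
    filter_upwards [Ioo_mem_nhdsGT_of_mem (by norm_num : (0:ℝ) ∈ Set.Ico 0 1)] with s hs
    have hs0 : (0:ℝ) < s := hs.1
    have hs1 : s < 1 := hs.2
    have hcv := hconv.2 (Set.mem_univ y) (Set.mem_univ z) (by linarith : (0:ℝ) ≤ 1 - s)
      (le_of_lt hs0) (by ring)
    have heq : (1 - s) • y + s • z = y + s • (z - y) := by
      module
    rw [heq] at hcv
    have : ψ s ≤ (1 - s) * Φ y + s * Φ z := by simpa [ψ, smul_eq_mul] using hcv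
    have hψ0 : ψ 0 = Φ y := by simp [ψ]
    rw [slope_def_field, hψ0, sub_zero, div_le_iff₀ hs0]
    nlinarith
  have := le_of_tendsto hslope hev
  linarith

lemma key {H : Type*} [NormedAddCommGroup H] [InnerProductSpace ℝ H] [CompleteSpace H]
    (Φ : H → ℝ) (hΦconv : ConvexOn ℝ Set.univ Φ) (hΦC1 : ContDiff ℝ 1 Φ)
    (xstar : H) (hxstar : ∀ y : H, Φ xstar ≤ Φ y)
    (α t₀ : ℝ) (ht₀ : 0 < t₀)
    (x : ℝ → H) (hx : ContDiff ℝ 2 x)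
    (hode : ∀ t : ℝ, t₀ ≤ t →
      deriv (deriv x) t + (α / t) • deriv x t + gradient Φ (x t) = 0)
    (p c : ℝ) (hp : p ≤ 1) (hc0 : 0 ≤ c) (hc1 : p + 1 < c)
    (hc2 : c ≤ α - p) (hc3 : c ≤ α - (p + 1) / 2) :
    MeasureTheory.IntegrableOn (fun t : ℝ => t ^ p * (Φ (x t) - Φ xstar)) (Set.Ioi t₀) := by
  have hΦd : Differentiable ℝ Φ := hΦC1.differentiable one_ne_zero
  have hdx : Differentiable ℝ x := hx.differentiable two_ne_zero
  have hx1' : ContDiff ℝ 1 (deriv x) := by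
    have h2 : ContDiff ℝ (1 + 1) x := by
      have he : ((1 : WithTop ℕ∞) + 1) = 2 := by norm_num
      rw [he]; exact hx
    exact (contDiff_succ_iff_deriv.mp h2).2.2
  have hdx' : Differentiable ℝ (deriv x) := hx1'.differentiable one_ne_zero
  obtain ⟨d, hd_def⟩ : ∃ d : ℝ, d = c * (α - p - c) := ⟨_, rfl⟩
  have hd0 : 0 ≤ d := hd_def ▸ mul_nonneg hc0 (by linarith)
  obtain ⟨F, hF_def⟩ : ∃ F : ℝ → ℝ, F = fun s => Φ (x s) - Φ xstar := ⟨_, rfl⟩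
  obtain ⟨A, hA_def⟩ : ∃ A : ℝ → ℝ, A = fun s => ⟪x s - xstar, x s - xstar⟫ := ⟨_, rfl⟩
  obtain ⟨B, hB_def⟩ : ∃ B : ℝ → ℝ, B = fun s => ⟪x s - xstar, deriv x s⟫ := ⟨_, rfl⟩
  obtain ⟨N, hN_def⟩ : ∃ N : ℝ → ℝ, N = fun s => ⟪deriv x s, deriv x s⟫ := ⟨_, rfl⟩
  obtain ⟨E, hE_def⟩ : ∃ E : ℝ → ℝ, E = fun s => s ^ (p+1) * F s
      + (1/2) * (s ^ (p-1) * (c^2 * A s)) + c * (s ^ p * B s)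
      + (1/2) * (s ^ (p+1) * N s) + (d/2) * (s ^ (p-1) * A s) := ⟨_, rfl⟩
  have hF0 : ∀ s, 0 ≤ F s := fun s => hF_def ▸ sub_nonneg.mpr (hxstar _)
  have hA0 : ∀ s, 0 ≤ A s := fun s => hA_def ▸ real_inner_self_nonneg
  have hN0 : ∀ s, 0 ≤ N s := fun s => hN_def ▸ real_inner_self_nonneg
  have hcontF : Continuous F := by
    rw [hF_def]; exact (hΦC1.continuous.comp hx.continuous).sub continuous_const
  -- nonnegativity of E
  have hEnn : ∀ s : ℝ, 0 < s → 0 ≤ E s := by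
    intro s hs
    have e1 : s ^ p = s ^ (p-1) * s := by
      rw [← Real.rpow_add_one hs.ne' (p-1)]; ring_nf
    have e2 : s ^ (p+1) = s ^ (p-1) * s * s := by
      rw [← e1, ← Real.rpow_add_one hs.ne' p]
    have hsq : 0 ≤ c^2 * A s + 2*c*s*B s + s^2*N s := by
      have h : (0:ℝ) ≤ ⟪c • (x s - xstar) + s • deriv x s, c • (x s - xstar) + s • deriv x s⟫ :=
        real_inner_self_nonneg
      have hexp : ⟪c • (x s - xstar) + s • deriv x s, c • (x s - xstar) + s • deriv x s⟫
          = c^2 * A s + 2*c*s*B s + s^2*N s := by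
        simp only [inner_add_left, inner_add_right, real_inner_smul_left, real_inner_smul_right,
          hA_def, hB_def, hN_def]
        rw [real_inner_comm (deriv x s) (x s - xstar)]
        ring
      rw [hexp] at h; exact h
    have hq1 : 0 < s ^ (p-1) := Real.rpow_pos_of_pos hs _
    rw [hE_def]
    simp only [e1, e2]
    nlinarith [mul_nonneg hq1.le hsq, mul_nonneg (mul_nonneg hq1.le hd0) (hA0 s),
      mul_nonneg (mul_nonneg (mul_nonneg hq1.le hs.le) hs.le) (hF0 s), hN0 s]
  -- continuity of the integrand
  have hfc : ∀ s : ℝ, 0 < s → ContinuousAt (fun r : ℝ => r ^ p * F r) s := fun s hs =>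
    (Real.continuousAt_rpow_const s p (Or.inl hs.ne')).mul hcontF.continuousAt
  obtain ⟨m, hm_def⟩ : ∃ m : ℝ, m = c - (p + 1) := ⟨_, rfl⟩
  have hm : 0 < m := by rw [hm_def]; linarith
  obtain ⟨G, hG_def⟩ : ∃ G : ℝ → ℝ,
      G = fun s => E s + m * ∫ r in t₀..s, r ^ p * F r := ⟨_, rfl⟩
  -- the derivative of G is nonpositive on [t₀, ∞)
  have hGd : ∀ t : ℝ, t₀ ≤ t → ∃ D : ℝ, HasDerivAt G D t ∧ D ≤ 0 := by
    intro t ht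
    have ht0 : 0 < t := lt_of_lt_of_le ht₀ ht
    have hxpp : deriv (deriv x) t = -((α / t) • deriv x t) - gradient Φ (x t) := by
      have h := hode t ht
      have h2 : deriv (deriv x) t + ((α / t) • deriv x t + gradient Φ (x t)) = 0 := by
        rw [← add_assoc]; exact h
      rw [add_eq_zero_iff_eq_neg] at h2
      rw [h2]; module
    have hu : HasDerivAt (fun s => x s - xstar) (deriv x t) t :=
      (hdx t).hasDerivAt.sub_const xstar
    have hA' : HasDerivAt A (⟪x t - xstar, deriv x t⟫ + ⟪deriv x t, x t - xstar⟫) t := by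
      rw [hA_def]; exact hu.inner ℝ hu
    have hB' : HasDerivAt B (⟪x t - xstar, deriv (deriv x) t⟫ + ⟪deriv x t, deriv x t⟫) t := by
      rw [hB_def]; exact hu.inner ℝ (hdx' t).hasDerivAt
    have hN' : HasDerivAt N (⟪deriv x t, deriv (deriv x) t⟫ + ⟪deriv (deriv x) t, deriv x t⟫) t := by
      rw [hN_def]; exact (hdx' t).hasDerivAt.inner ℝ (hdx' t).hasDerivAt
    have hF' : HasDerivAt F (⟪gradient Φ (x t), deriv x t⟫) t := by
      rw [hF_def]
      have h1 := ((hΦd (x t)).hasFDerivAt.comp_hasDerivAt t (hdx t).hasDerivAt).sub_const (Φ xstar)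
      refine h1.congr_deriv ?_
      rw [gradient, InnerProductSpace.toDual_symm_apply]
    have hr : ∀ q : ℝ, HasDerivAt (fun s : ℝ => s ^ q) (q * t ^ (q - 1)) t := fun q =>
      Real.hasDerivAt_rpow_const (Or.inl ht0.ne')
    -- the energy derivative in canonical form
    have hE' : HasDerivAt E ((p+1-c) * (t^p * F t)
        + ((p-1)/2*(c*(α-p))) * (t^(p-2) * A t)
        + ((p-1)/2 + c + 1 - α) * (t^p * N t)
        + c * (t^p * (F t - ⟪gradient Φ (x t), x t - xstar⟫))) t := by
      rw [hE_def]
      have hchain := (((((hr (p+1)).mul hF').add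
          (((hr (p-1)).mul (hA'.const_mul (c^2))).const_mul (1/2))).add
          (((hr p).mul hB').const_mul c)).add
          (((hr (p+1)).mul hN').const_mul (1/2))).add
          (((hr (p-1)).mul hA').const_mul (d/2))
      refine hchain.congr_deriv ?_
      rw [hxpp]
      have hAt : ⟪x t - xstar, x t - xstar⟫ = A t := by rw [hA_def]
      have hBt : ⟪x t - xstar, deriv x t⟫ = B t := by rw [hB_def]
      have hNt : ⟪deriv x t, deriv x t⟫ = N t := by rw [hN_def]
      simp only [hA_def, hB_def, hN_def, inner_sub_left, inner_sub_right, inner_neg_left,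
        inner_neg_right, real_inner_smul_left, real_inner_smul_right]
      rw [real_inner_comm xstar (x t), real_inner_comm (deriv x t) (x t),
        real_inner_comm (deriv x t) xstar, real_inner_comm (x t) (gradient Φ (x t)),
        real_inner_comm xstar (gradient Φ (x t)),
        real_inner_comm (deriv x t) (gradient Φ (x t))]
      simp only [show p+1-1 = p from by ring, show p-1-1 = p-2 from by ring]
      have hp1 : t ^ (p+1) = t ^ p * t := Real.rpow_add_one ht0.ne' p
      have hp0 : t ^ p = t ^ (p-1) * t := by
        rw [← Real.rpow_add_one ht0.ne' (p-1)]; ring_nf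
      have hpm : t ^ (p-1) = t ^ (p-2) * t := by
        rw [← Real.rpow_add_one ht0.ne' (p-2)]; ring_nf
      rw [hp1, hp0, hpm, hd_def]
      field_simp
      ring
    -- derivative of the integral part
    have hFTC : HasDerivAt (fun s => ∫ r in t₀..s, r ^ p * F r) (t ^ p * F t) t := by
      apply intervalIntegral.integral_hasDerivAt_right
      · apply ContinuousOn.intervalIntegrable
        intro s hs
        rw [uIcc_of_le ht] at hs
        exact (hfc s (lt_of_lt_of_le ht₀ hs.1)).continuousWithinAt
      · exact ContinuousAt.stronglyMeasurableAtFilter isOpen_Ioi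
          (fun s hs => hfc s hs) t ht0
      · exact hfc t ht0
    refine ⟨_, by rw [hG_def]; exact hE'.add (hFTC.const_mul m), ?_⟩
    -- nonpositivity
    have hWF : F t ≤ ⟪gradient Φ (x t), x t - xstar⟫ := by
      have h := grad_ineq' hΦconv hΦd (x t) xstar
      have h2 : ⟪gradient Φ (x t), xstar - x t⟫ = -⟪gradient Φ (x t), x t - xstar⟫ := by
        rw [show xstar - x t = -(x t - xstar) from by abel, inner_neg_right]
      rw [hF_def]; simp only; linarith [h2 ▸ h]
    have hq2 : (0:ℝ) < t ^ (p-2) := Real.rpow_pos_of_pos ht0 _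
    have hqp : (0:ℝ) < t ^ p := Real.rpow_pos_of_pos ht0 _
    have h1 : ((p-1)/2*(c*(α-p))) * (t^(p-2) * A t) ≤ 0 :=
      mul_nonpos_of_nonpos_of_nonneg
        (mul_nonpos_of_nonpos_of_nonneg (by linarith) (mul_nonneg hc0 (by linarith)))
        (mul_nonneg hq2.le (hA0 t))
    have h2 : ((p-1)/2 + c + 1 - α) * (t^p * N t) ≤ 0 :=
      mul_nonpos_of_nonpos_of_nonneg (by linarith) (mul_nonneg hqp.le (hN0 t))
    have h3 : c * (t^p * (F t - ⟪gradient Φ (x t), x t - xstar⟫)) ≤ 0 :=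
      mul_nonpos_of_nonneg_of_nonpos hc0
        (mul_nonpos_of_nonneg_of_nonpos hqp.le (by linarith))
    have h4 : 0 ≤ t ^ p * F t := mul_nonneg hqp.le (hF0 t)
    rw [hm_def]
    nlinarith [h1, h2, h3, h4]
  -- G is antitone on [t₀, ∞)
  have hanti : AntitoneOn G (Ici t₀) := by
    apply antitoneOn_of_deriv_nonpos (convex_Ici t₀)
    · intro s hs
      obtain ⟨D, hD, _⟩ := hGd s hs
      exact hD.continuousAt.continuousWithinAt
    · intro s hs
      rw [interior_Ici] at hs
      obtain ⟨D, hD, _⟩ := hGd s hs.le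
      exact hD.differentiableAt.differentiableWithinAt
    · intro s hs
      rw [interior_Ici] at hs
      obtain ⟨D, hD, hD0⟩ := hGd s hs.le
      rw [hD.deriv]; exact hD0
  -- conclusion
  have hFeq : (fun t : ℝ => t ^ p * (Φ (x t) - Φ xstar)) = fun t : ℝ => t ^ p * F t := by
    rw [hF_def]
  rw [hFeq]
  apply MeasureTheory.integrableOn_Ioi_of_intervalIntegral_norm_bounded (E t₀ / m) t₀
    (b := fun i : ℝ => i) (l := Filter.atTop) ?_ Filter.tendsto_id ?_
  · intro i
    have hcIcc : ContinuousOn (fun r : ℝ => r ^ p * F r) (Icc t₀ i) := fun s hs =>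
      (hfc s (lt_of_lt_of_le ht₀ hs.1)).continuousWithinAt
    exact hcIcc.integrableOn_Icc.mono_set Ioc_subset_Icc_self
  · filter_upwards [Filter.eventually_ge_atTop t₀] with i hi
    have hnorm : ∫ r in t₀..i, ‖r ^ p * F r‖ = ∫ r in t₀..i, r ^ p * F r := by
      apply intervalIntegral.integral_congr
      intro s hs
      rw [uIcc_of_le hi] at hs
      have hs0 : 0 < s := lt_of_lt_of_le ht₀ hs.1
      exact abs_of_nonneg (mul_nonneg (Real.rpow_pos_of_pos hs0 p).le (hF0 s))
    rw [hnorm]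
    have h1 : G i ≤ G t₀ := hanti self_mem_Ici hi hi
    have hGt₀ : G t₀ = E t₀ := by
      rw [hG_def]; simp [intervalIntegral.integral_same]
    have hGi : G i = E i + m * ∫ r in t₀..i, r ^ p * F r := by rw [hG_def]
    have hEi : 0 ≤ E i := hEnn i (lt_of_lt_of_le ht₀ hi)
    rw [le_div_iff₀ hm]
    nlinarith [h1, hGt₀, hGi, hEi]

/-- integral estimates of the values along trajectories of `(AVD)_α`:
if `α > 3` then `∫_{t₀}^∞ t (Φ(x(t)) - inf Φ) dt < ∞`; if `α ≤ 3` then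
`∫_{t₀}^∞ t^p (Φ(x(t)) - inf Φ) dt < ∞` for every `p < 2α/3 - 1`. -/
theorem stmt_2
    {H : Type*} [NormedAddCommGroup H] [InnerProductSpace ℝ H] [CompleteSpace H]
    (Φ : H → ℝ) (hΦconv : ConvexOn ℝ Set.univ Φ) (hΦC1 : ContDiff ℝ 1 Φ)
    (xstar : H) (hxstar : ∀ y : H, Φ xstar ≤ Φ y)
    (α t₀ : ℝ) (hα0 : 0 < α) (ht₀ : 0 < t₀)
    (x : ℝ → H) (hx : ContDiff ℝ 2 x)
    (hode : ∀ t : ℝ, t₀ ≤ t →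
      deriv (deriv x) t + (α / t) • deriv x t + gradient Φ (x t) = 0) :
    (3 < α → MeasureTheory.IntegrableOn
        (fun t : ℝ => t * (Φ (x t) - Φ xstar)) (Set.Ioi t₀)) ∧
    (α ≤ 3 → ∀ p : ℝ, p < 2 * α / 3 - 1 → MeasureTheory.IntegrableOn
        (fun t : ℝ => t ^ p * (Φ (x t) - Φ xstar)) (Set.Ioi t₀)) := by
  constructor
  · intro hα3
    have h := key Φ hΦconv hΦC1 xstar hxstar α t₀ ht₀ x hx hode 1 ((α+1)/2)
      le_rfl (by linarith) (by linarith) (by linarith) (by linarith)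
    apply h.congr_fun ?_ measurableSet_Ioi
    intro t _
    simp [Real.rpow_one]
  · intro hα3 p hp
    have h1 : p + 1 < α - (p + 1) / 2 := by linarith
    have h0 : 0 < α - (p + 1) / 2 := by
      rcases le_or_gt (p + 1) 0 with h | h
      · linarith
      · linarith
    have hp1 : p ≤ 1 := by linarith
    set c : ℝ := (max (p + 1) 0 + (α - (p + 1) / 2)) / 2 with hc_def
    have hmax1 : p + 1 ≤ max (p + 1) 0 := le_max_left _ _
    have hmax2 : (0:ℝ) ≤ max (p + 1) 0 := le_max_right _ _
    have hmax3 : max (p + 1) 0 ≤ α - (p + 1) / 2 := max_le h1.le h0.le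
    exact key Φ hΦconv hΦC1 xstar hxstar α t₀ ht₀ x hx hode p c
      hp1 (by rw [hc_def]; linarith) (by rw [hc_def]; linarith)
      (by rw [hc_def]; linarith) (by rw [hc_def]; linarith)
end

section
/- Suppose α ≥ 3. Then the trajectory is bounded, i.e. sup_{t ≥ t₀} ‖x(t)‖ < +∞, and the speed satisfies ‖ẋ(t)‖ = O(1/t) as t → +∞, i.e. there exists M ≥ 0 with ‖ẋ(t)‖ ≤ M/t for all t ≥ t₀. -/
open scoped RealInnerProductSpace

lemma grad_convex_ineq {H : Type*} [NormedAddCommGroup H] [InnerProductSpace ℝ H]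
    [CompleteSpace H] {Φ : H → ℝ} (hc : ConvexOn ℝ Set.univ Φ)
    (hd : Differentiable ℝ Φ) (z w : H) :
    Φ z + ⟪gradient Φ z, w - z⟫ ≤ Φ w := by
  have hline : HasDerivAt (fun s : ℝ => (AffineMap.lineMap z w) s) (w - z) 0 := by
    have h := ((hasDerivAt_id (0:ℝ)).smul_const (w - z)).add_const z
    have heq : (fun s : ℝ => (AffineMap.lineMap z w) s) = fun s : ℝ => s • (w - z) + z := by
      funext s
      simp [AffineMap.lineMap_apply_module]
      module
    rw [heq]
    simpa using h
  have hgrad : HasDerivAt (fun s : ℝ => Φ ((AffineMap.lineMap z w) s))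
      ⟪gradient Φ z, w - z⟫ 0 := by
    have h1 := ((hd ((AffineMap.lineMap z w) (0:ℝ))).hasGradientAt.hasFDerivAt).comp_hasDerivAt
      0 hline
    simpa [Function.comp_def, InnerProductSpace.toDual_apply_apply] using h1
  have hconv : ConvexOn ℝ Set.univ (fun s : ℝ => Φ ((AffineMap.lineMap z w) s)) := by
    have := hc.comp_affineMap (AffineMap.lineMap z w)
    simpa [Set.preimage_univ, Function.comp_def] using this
  have hs := hconv.le_slope_of_hasDerivAt (Set.mem_univ (0:ℝ)) (Set.mem_univ (1:ℝ))
    zero_lt_one hgrad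
  simp [slope] at hs
  have hg : ⟪gradient Φ z, w - z⟫ = fderiv ℝ Φ z w - fderiv ℝ Φ z z := by
    simp [gradient, InnerProductSpace.toDual_symm_apply, inner_sub_right]
  linarith



/-- for `α ≥ 3`, the trajectory of `(AVD)_α` is bounded and the
speed satisfies `‖ẋ(t)‖ = O(1/t)`. -/
theorem stmt_4
    {H : Type*} [NormedAddCommGroup H] [InnerProductSpace ℝ H] [CompleteSpace H]
    (Φ : H → ℝ) (hΦconv : ConvexOn ℝ Set.univ Φ) (hΦC1 : ContDiff ℝ 1 Φ)
    (xstar : H) (hxstar : ∀ y : H, Φ xstar ≤ Φ y)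
    (α t₀ : ℝ) (hα : 3 ≤ α) (ht₀ : 0 < t₀)
    (x : ℝ → H) (hx : ContDiff ℝ 2 x)
    (hode : ∀ t : ℝ, t₀ ≤ t →
      deriv (deriv x) t + (α / t) • deriv x t + gradient Φ (x t) = 0) :
    (∃ B : ℝ, ∀ t : ℝ, t₀ ≤ t → ‖x t‖ ≤ B) ∧
    (∃ M : ℝ, 0 ≤ M ∧ ∀ t : ℝ, t₀ ≤ t → ‖deriv x t‖ ≤ M / t) := by
  have hxd : Differentiable ℝ x := hx.differentiable (by norm_num)
  have hvC1 : ContDiff ℝ 1 (deriv x) := by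
    have h2 : ContDiff ℝ ((1:ℕ) + 1) x := by exact_mod_cast hx
    exact (contDiff_succ_iff_deriv.mp h2).2.2
  have hvd : Differentiable ℝ (deriv x) := hvC1.differentiable one_ne_zero
  have hΦd : Differentiable ℝ Φ := hΦC1.differentiable one_ne_zero
  -- the Lyapunov quantities
  set p : ℝ → H := fun t => (α - 1) • (x t - xstar) + t • deriv x t with hpdef
  set E : ℝ → ℝ := fun t => t ^ 2 * (Φ (x t) - Φ xstar) + (1/2) * ⟪p t, p t⟫ with hEdef
  -- generic derivative of p
  have hp : ∀ t : ℝ, HasDerivAt p (α • deriv x t + t • deriv (deriv x) t) t := by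
    intro t
    have h1 : HasDerivAt (fun s => (α - 1) • (x s - xstar)) ((α - 1) • deriv x t) t :=
      ((hxd t).hasDerivAt.sub_const xstar).const_smul (α - 1)
    have h2 : HasDerivAt (fun s : ℝ => s • deriv x s)
        ((t : ℝ) • deriv (deriv x) t + (1:ℝ) • deriv x t) t :=
      (hasDerivAt_id t).smul (hvd t).hasDerivAt
    have := h1.add h2
    convert this using 1
    rfl
    module
  -- derivative of composite Φ ∘ x
  have hphi : ∀ t : ℝ, HasDerivAt (fun s => Φ (x s) - Φ xstar)
      ⟪gradient Φ (x t), deriv x t⟫ t := by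
    intro t
    have h1 := ((hΦd (x t)).hasGradientAt.hasFDerivAt).comp_hasDerivAt t (hxd t).hasDerivAt
    have h2 : HasDerivAt (fun s => Φ (x s)) ⟪gradient Φ (x t), deriv x t⟫ t := by
      simpa [Function.comp_def, InnerProductSpace.toDual_apply_apply] using h1
    exact h2.sub_const _
  -- generic derivative of E
  have hE : ∀ t : ℝ, HasDerivAt E
      ((2 * t) * (Φ (x t) - Φ xstar) + t ^ 2 * ⟪gradient Φ (x t), deriv x t⟫
        + (1/2) * (⟪p t, α • deriv x t + t • deriv (deriv x) t⟫
            + ⟪α • deriv x t + t • deriv (deriv x) t, p t⟫)) t := by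
    intro t
    have h1 : HasDerivAt (fun s : ℝ => s ^ 2 * (Φ (x s) - Φ xstar))
        ((2 * t) * (Φ (x t) - Φ xstar) + t ^ 2 * ⟪gradient Φ (x t), deriv x t⟫) t := by
      have := (hasDerivAt_pow 2 t).mul (hphi t)
      simpa [Pi.mul_def] using this
    have h2 := ((hp t).inner ℝ (hp t)).const_mul (1/2 : ℝ)
    exact h1.add h2
  -- for t ≥ t₀ the derivative of p equals -(t • ∇Φ(x t))
  have hpode : ∀ t : ℝ, t₀ ≤ t →
      α • deriv x t + t • deriv (deriv x) t = -(t • gradient Φ (x t)) := by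
    intro t ht
    have htpos : (0:ℝ) < t := lt_of_lt_of_le ht₀ ht
    have h0 := hode t ht
    have ha : deriv (deriv x) t = -((α / t) • deriv x t + gradient Φ (x t)) := by
      rw [add_assoc] at h0
      exact eq_neg_of_add_eq_zero_left h0
    rw [ha]
    rw [smul_neg, smul_add, smul_smul, mul_div_cancel₀ α (ne_of_gt htpos)]
    module
  -- the first-order convexity inequality
  have key : ∀ t : ℝ, Φ (x t) - Φ xstar ≤ ⟪gradient Φ (x t), x t - xstar⟫ := by
    intro t
    have := grad_convex_ineq hΦconv hΦd (x t) xstar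
    have h2 : ⟪gradient Φ (x t), xstar - x t⟫ = -⟪gradient Φ (x t), x t - xstar⟫ := by
      rw [show xstar - x t = -(x t - xstar) by abel, inner_neg_right]
    linarith [this, hxstar (x t)]
  have hgnonneg : ∀ t : ℝ, 0 ≤ Φ (x t) - Φ xstar := fun t => sub_nonneg.mpr (hxstar (x t))
  -- deriv E is nonpositive on [t₀, ∞)
  have hEderiv_nonpos : ∀ t : ℝ, t₀ ≤ t → deriv E t ≤ 0 := by
    intro t ht
    have htpos : (0:ℝ) < t := lt_of_lt_of_le ht₀ ht
    rw [(hE t).deriv, hpode t ht]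
    have e1 : ⟪p t, -(t • gradient Φ (x t))⟫
        = -(t * ((α - 1) * ⟪x t - xstar, gradient Φ (x t)⟫
            + t * ⟪deriv x t, gradient Φ (x t)⟫)) := by
      simp only [hpdef, inner_neg_right, real_inner_smul_right, inner_add_left,
        real_inner_smul_left]
      ring
    have e2 : ⟪-(t • gradient Φ (x t)), p t⟫ = ⟪p t, -(t • gradient Φ (x t))⟫ :=
      real_inner_comm _ _
    have e3 : ⟪gradient Φ (x t), deriv x t⟫ = ⟪deriv x t, gradient Φ (x t)⟫ :=
      real_inner_comm _ _
    rw [e2, e1, e3]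
    have e4 : Φ (x t) - Φ xstar ≤ ⟪x t - xstar, gradient Φ (x t)⟫ := by
      rw [real_inner_comm]; exact key t
    have e5 : t * (Φ (x t) - Φ xstar) ≤ t * ⟪x t - xstar, gradient Φ (x t)⟫ :=
      mul_le_mul_of_nonneg_left e4 htpos.le
    have e6 : (α - 1) * (t * (Φ (x t) - Φ xstar))
        ≤ (α - 1) * (t * ⟪x t - xstar, gradient Φ (x t)⟫) :=
      mul_le_mul_of_nonneg_left e5 (by linarith)
    have e7 : 0 ≤ (α - 3) * (t * (Φ (x t) - Φ xstar)) :=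
      mul_nonneg (by linarith) (mul_nonneg htpos.le (hgnonneg t))
    nlinarith [e6, e7]
  -- E is nonincreasing on [t₀, ∞)
  have hEanti : AntitoneOn E (Set.Ici t₀) := by
    apply antitoneOn_of_deriv_nonpos (convex_Ici t₀)
    · exact fun t _ => ((hE t).continuousAt).continuousWithinAt
    · intro t ht
      exact ((hE t).differentiableAt).differentiableWithinAt
    · intro t ht
      rw [interior_Ici] at ht
      exact hEderiv_nonpos t (le_of_lt ht)
  -- bound on ‖p t‖
  set C : ℝ := Real.sqrt (2 * E t₀) with hCdef
  have hCnonneg : 0 ≤ C := Real.sqrt_nonneg _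
  have hpbound : ∀ t : ℝ, t₀ ≤ t → ‖p t‖ ≤ C := by
    intro t ht
    have hEle : E t ≤ E t₀ := hEanti (Set.self_mem_Ici) ht ht
    have h1 : ‖p t‖ ^ 2 ≤ 2 * E t₀ := by
      have h2 : (0:ℝ) ≤ t ^ 2 * (Φ (x t) - Φ xstar) :=
        mul_nonneg (sq_nonneg t) (hgnonneg t)
      have h3 : ⟪p t, p t⟫ = ‖p t‖ ^ 2 := real_inner_self_eq_norm_sq (p t)
      have h4 : E t = t ^ 2 * (Φ (x t) - Φ xstar) + (1/2) * ‖p t‖ ^ 2 := by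
        rw [hEdef]; simp only; rw [h3]
      have h5 : E t₀ = t₀ ^ 2 * (Φ (x t₀) - Φ xstar) + (1/2) * ‖p t₀‖ ^ 2 := by
        rw [hEdef]; simp only; rw [real_inner_self_eq_norm_sq]
      clear_value E p C
      linarith [hEle, h2, h4]
    calc ‖p t‖ = Real.sqrt (‖p t‖ ^ 2) := (Real.sqrt_sq (norm_nonneg _)).symm
      _ ≤ C := Real.sqrt_le_sqrt h1
  -- part 2
  have hα2 : (1:ℝ) ≤ α - 1 := by linarith
  have hP : (0:ℝ) < t₀ ^ (α - 1) := Real.rpow_pos_of_pos ht₀ _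
  set q : ℝ → H := fun t => t ^ (α - 1) • (x t - xstar) with hqdef
  have hq : ∀ t : ℝ, t₀ ≤ t → HasDerivAt q (t ^ (α - 2) • p t) t := by
    intro t ht
    have htpos : (0:ℝ) < t := lt_of_lt_of_le ht₀ ht
    have h1 : HasDerivAt (fun s : ℝ => s ^ (α - 1)) ((α - 1) * t ^ (α - 1 - 1)) t :=
      Real.hasDerivAt_rpow_const (Or.inr hα2)
    have h2 := h1.smul ((hxd t).hasDerivAt.sub_const xstar)
    convert h2 using 1
    rfl
    have hpow : t ^ (α - 1) = t ^ (α - 2) * t := by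
      rw [show α - 1 = (α - 2) + 1 by ring, Real.rpow_add htpos, Real.rpow_one]
    have hpow2 : α - 1 - 1 = α - 2 := by ring
    rw [hpow2, hpow, hpdef]
    simp only
    module
  set D : ℝ := ‖q t₀‖ with hDdef
  have hDnonneg : 0 ≤ D := norm_nonneg _
  set K : ℝ := C / (α - 1) with hKdef
  have hKnonneg : 0 ≤ K := div_nonneg hCnonneg (by linarith)
  have hqbound : ∀ T : ℝ, t₀ ≤ T → ‖q T‖ ≤ D + K * (T ^ (α-1) - t₀ ^ (α-1)) := by
    intro T hT
    have hB : ∀ s : ℝ, HasDerivAt (fun r : ℝ => D + K * (r ^ (α-1) - t₀ ^ (α-1)))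
        (K * ((α - 1) * s ^ (α - 2))) s := by
      intro s
      have h1 : HasDerivAt (fun r : ℝ => r ^ (α-1)) ((α-1) * s ^ (α-1-1)) s :=
        Real.hasDerivAt_rpow_const (Or.inr hα2)
      have := ((h1.sub_const (t₀ ^ (α-1))).const_mul K).const_add D
      simpa [show α - 1 - 1 = α - 2 by ring] using this
    have hcont : ContinuousOn q (Set.Icc t₀ T) := fun s hs =>
      ((hq s hs.1).continuousAt).continuousWithinAt
    have hbnd : ∀ s ∈ Set.Ico t₀ T, ‖s ^ (α-2) • p s‖ ≤ K * ((α-1) * s ^ (α-2)) := by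
      intro s hs
      have hspos : (0:ℝ) < s := lt_of_lt_of_le ht₀ hs.1
      have hrpos : (0:ℝ) < s ^ (α - 2) := Real.rpow_pos_of_pos hspos _
      rw [norm_smul, Real.norm_eq_abs, abs_of_pos hrpos]
      have heq : K * ((α-1) * s ^ (α-2)) = s ^ (α-2) * C := by
        rw [hKdef]; field_simp
      rw [heq]
      exact mul_le_mul_of_nonneg_left (hpbound s hs.1) hrpos.le
    have hmain := image_norm_le_of_norm_deriv_right_le_deriv_boundary hcont
      (fun s hs => (hq s hs.1).hasDerivWithinAt) (by simp [hDdef]) hB hbnd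
      (Set.right_mem_Icc.mpr hT)
    simpa using hmain
  have hxbound : ∀ T : ℝ, t₀ ≤ T → ‖x T - xstar‖ ≤ D / t₀ ^ (α-1) + K := by
    intro T hT
    have hTpos : (0:ℝ) < T := lt_of_lt_of_le ht₀ hT
    have hApos : (0:ℝ) < T ^ (α-1) := Real.rpow_pos_of_pos hTpos _
    have hPA : t₀ ^ (α-1) ≤ T ^ (α-1) := Real.rpow_le_rpow ht₀.le hT (by linarith)
    have hnorm : ‖q T‖ = T ^ (α-1) * ‖x T - xstar‖ := by
      rw [hqdef]; simp only; rw [norm_smul, Real.norm_eq_abs, abs_of_pos hApos]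
    have h1 := hqbound T hT
    rw [hnorm] at h1
    have h2 : T ^ (α-1) * ‖x T - xstar‖ ≤ D + K * T ^ (α-1) := by nlinarith [hKnonneg, hP]
    have h3 : ‖x T - xstar‖ ≤ (D + K * T ^ (α-1)) / T ^ (α-1) :=
      (le_div_iff₀ hApos).mpr (by linarith)
    have h4 : (D + K * T ^ (α-1)) / T ^ (α-1) = D / T ^ (α-1) + K := by
      field_simp
    have h5 : D / T ^ (α-1) ≤ D / t₀ ^ (α-1) := by gcongr
    linarith
  set B₀ : ℝ := D / t₀ ^ (α-1) + K with hB₀def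
  have hB₀nonneg : 0 ≤ B₀ := add_nonneg (div_nonneg hDnonneg hP.le) hKnonneg
  refine ⟨⟨‖xstar‖ + B₀, fun t ht => ?_⟩, ⟨C + (α-1) * B₀, ?_, fun t ht => ?_⟩⟩
  · have h7 := hxbound t ht
    calc ‖x t‖ = ‖xstar + (x t - xstar)‖ := by rw [add_sub_cancel]
      _ ≤ ‖xstar‖ + ‖x t - xstar‖ := norm_add_le _ _
      _ ≤ ‖xstar‖ + B₀ := by linarith
  · have : 0 ≤ (α-1) * B₀ := mul_nonneg (by linarith) hB₀nonneg
    linarith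
  · have htpos : (0:ℝ) < t := lt_of_lt_of_le ht₀ ht
    have hsmul : t • deriv x t = p t - (α-1) • (x t - xstar) := by
      rw [hpdef]; simp only; module
    have h6 : ‖t • deriv x t‖ ≤ C + (α-1) * B₀ := by
      rw [hsmul]
      have h7 := hxbound t ht
      have h8 := hpbound t ht
      calc ‖p t - (α-1) • (x t - xstar)‖
          ≤ ‖p t‖ + ‖(α-1) • (x t - xstar)‖ := norm_sub_le _ _
        _ = ‖p t‖ + |α-1| * ‖x t - xstar‖ := by rw [norm_smul, Real.norm_eq_abs]
        _ ≤ C + (α-1) * B₀ := by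
            rw [abs_of_pos (by linarith : (0:ℝ) < α - 1)]
            have h9 := mul_le_mul_of_nonneg_left h7 (by linarith : (0:ℝ) ≤ α - 1)
            linarith
    rw [norm_smul, Real.norm_eq_abs, abs_of_pos htpos] at h6
    rw [le_div_iff₀ htpos]
    nlinarith [h6]
end

section
/- Suppose 1 ≤ α ≤ 3. Then for every real p with p < (α − 1)/2, the speed satisfies ‖ẋ(t)‖ = O(1/t^p) as t → +∞, i.e. there exists M ≥ 0 with ‖ẋ(t)‖ ≤ M/t^p for all t ≥ t₀. -/
open Set Filter Topology
open scoped RealInnerProductSpace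

section Aux

variable {H : Type*} [NormedAddCommGroup H] [InnerProductSpace ℝ H] [CompleteSpace H]

lemma avd_convex_grad_ineq (Φ : H → ℝ) (hΦconv : ConvexOn ℝ Set.univ Φ)
    (hΦC1 : ContDiff ℝ 1 Φ) (y w : H) : Φ y + ⟪gradient Φ y, w - y⟫ ≤ Φ w := by
  have hΦd : Differentiable ℝ Φ := hΦC1.differentiable one_ne_zero
  set g : ℝ → ℝ := fun s => Φ (y + s • (w - y)) with hg
  have hL : HasDerivAt (fun s : ℝ => y + s • (w - y)) (w - y) 0 := by
    simpa using ((hasDerivAt_id (0:ℝ)).smul_const (w - y)).const_add y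
  have hg0 : HasDerivAt g (fderiv ℝ Φ y (w - y)) 0 := by
    have := (hΦd (y + (0:ℝ) • (w - y))).hasFDerivAt.comp_hasDerivAt 0 hL
    simpa [hg, Function.comp_def] using this
  have key : fderiv ℝ Φ y (w - y) ≤ Φ w - Φ y := by
    have htend : Tendsto (slope g 0) (𝓝[>] 0) (𝓝 (fderiv ℝ Φ y (w - y))) :=
      (hasDerivAt_iff_tendsto_slope.1 hg0).mono_left
        (nhdsWithin_mono 0 fun s hs => ne_of_gt hs)
    refine le_of_tendsto htend ?_
    filter_upwards [Ioo_mem_nhdsGT_of_mem (Set.left_mem_Ico.2 one_pos)] with s hs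
    have hs0 : (0:ℝ) < s := hs.1
    have hs1 : s < 1 := hs.2
    have hconv := hΦconv.2 (Set.mem_univ y) (Set.mem_univ w)
      (by linarith : (0:ℝ) ≤ 1 - s) hs0.le (by ring)
    have hpt : (1 - s) • y + s • w = y + s • (w - y) := by module
    rw [hpt] at hconv
    have hle : g s ≤ (1 - s) * Φ y + s * Φ w := by simpa [smul_eq_mul] using hconv
    have hg00 : g 0 = Φ y := by simp [hg]
    rw [slope_def_field, hg00, sub_zero, div_le_iff₀ hs0]
    nlinarith
  have hgr : ⟪gradient Φ y, w - y⟫ = fderiv ℝ Φ y (w - y) :=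
    InnerProductSpace.toDual_symm_apply
  linarith [hgr.le, hgr.ge]

end Aux

set_option maxHeartbeats 1600000 in
/-- for `1 ≤ α ≤ 3`, the speed of any trajectory of `(AVD)_α`
satisfies `‖ẋ(t)‖ = O(1/t^p)` for every `p < (α-1)/2`. -/
theorem stmt_6
    {H : Type*} [NormedAddCommGroup H] [InnerProductSpace ℝ H] [CompleteSpace H]
    (Φ : H → ℝ) (hΦconv : ConvexOn ℝ Set.univ Φ) (hΦC1 : ContDiff ℝ 1 Φ)
    (xstar : H) (hxstar : ∀ y : H, Φ xstar ≤ Φ y)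
    (α t₀ : ℝ) (hα1 : 1 ≤ α) (hα3 : α ≤ 3) (ht₀ : 0 < t₀)
    (x : ℝ → H) (hx : ContDiff ℝ 2 x)
    (hode : ∀ t : ℝ, t₀ ≤ t →
      deriv (deriv x) t + (α / t) • deriv x t + gradient Φ (x t) = 0)
    (p : ℝ) (hp : p < (α - 1) / 2) :
    ∃ M : ℝ, 0 ≤ M ∧ ∀ t : ℝ, t₀ ≤ t → ‖deriv x t‖ ≤ M / t ^ p := by
  have hΦd : Differentiable ℝ Φ := hΦC1.differentiable one_ne_zero
  have hx' : ContDiff ℝ ((1:WithTop ℕ∞) + 1) x := by rwa [one_add_one_eq_two]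
  obtain ⟨hxd, -, hv1⟩ := contDiff_succ_iff_deriv.mp hx'
  have hvd : Differentiable ℝ (deriv x) := hv1.differentiable one_ne_zero
  set v : ℝ → H := deriv x with hv_def
  set a : ℝ → H := deriv v with ha_def
  set g : H → H := gradient Φ with hg_def
  clear_value v a g
  have hv : ∀ t, HasDerivAt x (v t) t := by rw [hv_def]; exact fun t => (hxd t).hasDerivAt
  have ha : ∀ t, HasDerivAt v (a t) t := by rw [ha_def]; exact fun t => (hvd t).hasDerivAt
  have hphi : ∀ t : ℝ, HasDerivAt (fun s => Φ (x s)) ⟪g (x t), v t⟫ t := by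
    intro t
    have h := (hΦd (x t)).hasFDerivAt.comp_hasDerivAt t (hv t)
    rw [← InnerProductSpace.toDual_symm_apply (𝕜 := ℝ)] at h
    rw [hg_def]
    exact h
  have hodea : ∀ t, t₀ ≤ t → a t = -((α / t) • v t) - g (x t) := by
    intro t ht
    have h := hode t ht
    have h2 : a t + ((α / t) • v t + g (x t)) = 0 := by rw [← add_assoc]; exact h
    rw [add_eq_zero_iff_eq_neg] at h2
    rw [h2]; abel
  have hzg : ∀ t : ℝ, Φ (x t) - Φ xstar ≤ ⟪x t - xstar, g (x t)⟫ := by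
    intro t
    have h := avd_convex_grad_ineq Φ hΦconv hΦC1 (x t) xstar
    rw [← hg_def] at h
    have h2 : ⟪g (x t), xstar - x t⟫ = -⟪x t - xstar, g (x t)⟫ := by
      rw [real_inner_comm, show xstar - x t = -(x t - xstar) by abel, inner_neg_left]
    rw [h2] at h
    linarith
  rcases le_or_gt p 0 with hp0 | hp0
  · -- energy decay: speed bounded
    set W : ℝ → ℝ := fun t => (1/2) * ⟪v t, v t⟫ + Φ (x t) with hW
    clear_value W
    have hW' : ∀ t, HasDerivAt W ((1/2) * (⟪v t, a t⟫ + ⟪a t, v t⟫) + ⟪g (x t), v t⟫) t := by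
      rw [hW]
      exact fun t => (((ha t).inner ℝ (ha t)).const_mul _).add (hphi t)
    have hmono : AntitoneOn W (Ici t₀) := by
      apply antitoneOn_of_deriv_nonpos (convex_Ici t₀)
      · exact fun t _ => ((hW' t).continuousAt).continuousWithinAt
      · exact fun t _ => (hW' t).differentiableAt.differentiableWithinAt
      · intro t ht
        rw [interior_Ici] at ht
        have htpos : 0 < t := lt_trans ht₀ ht
        rw [(hW' t).deriv, hodea t ht.le]
        have hvv : 0 ≤ ⟪v t, v t⟫ := real_inner_self_nonneg
        have hα : 0 ≤ α / t := div_nonneg (by linarith) htpos.le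
        simp only [inner_sub_right, inner_sub_left, inner_neg_left, inner_neg_right,
          real_inner_smul_left, real_inner_smul_right, real_inner_comm (v t) (g (x t))]
        nlinarith
    have key : ∀ t, t₀ ≤ t → (1/2) * ⟪v t, v t⟫ ≤ W t₀ - Φ xstar := by
      intro t ht
      have h1 := hmono self_mem_Ici ht ht
      have h2 := hxstar (x t)
      simp only [hW] at h1 ⊢
      linarith
    have hK : 0 ≤ W t₀ - Φ xstar := by
      have h2 := hxstar (x t₀)
      have hvv : 0 ≤ ⟪v t₀, v t₀⟫ := real_inner_self_nonneg
      simp only [hW]; linarith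
    refine ⟨Real.sqrt (2*(W t₀ - Φ xstar)) * t₀ ^ p, by positivity, ?_⟩
    intro t ht
    have htpos : 0 < t := lt_of_lt_of_le ht₀ ht
    have hnorm : ‖v t‖ ≤ Real.sqrt (2*(W t₀ - Φ xstar)) := by
      have hk := key t ht
      rw [real_inner_self_eq_norm_sq] at hk
      calc ‖v t‖ = Real.sqrt (‖v t‖^2) := (Real.sqrt_sq (norm_nonneg _)).symm
        _ ≤ Real.sqrt (2*(W t₀ - Φ xstar)) := Real.sqrt_le_sqrt (by linarith)
    have hle : t ^ p ≤ t₀ ^ p := Real.rpow_le_rpow_of_nonpos ht₀ ht hp0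
    have htp : 0 < t ^ p := Real.rpow_pos_of_pos htpos p
    rw [le_div_iff₀ htp]
    calc ‖v t‖ * t ^ p ≤ Real.sqrt (2*(W t₀ - Φ xstar)) * t ^ p :=
          mul_le_mul_of_nonneg_right hnorm htp.le
      _ ≤ Real.sqrt (2*(W t₀ - Φ xstar)) * t₀ ^ p :=
          mul_le_mul_of_nonneg_left hle (Real.sqrt_nonneg _)
  · -- Lyapunov analysis
    have hp1 : p < 1 := by linarith
    have h3p : 3 * p ≤ α := by nlinarith
    have hc : 0 < 2*p*(α+1-4*p) := by nlinarith
    set z : ℝ → H := fun t => x t - xstar with hz_def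
    set w : ℝ → H := fun t => (2*p) • z t + t • v t with hw_def
    clear_value z
    have hzderiv : ∀ t, HasDerivAt z (v t) t := by
      rw [hz_def]; exact fun t => (hv t).sub_const xstar
    clear_value w
    have hwderiv : ∀ t, HasDerivAt w ((2*p) • v t + (t • a t + v t)) t := by
      rw [hw_def]
      intro t
      have := ((hzderiv t).const_smul (2*p)).add ((hasDerivAt_id t).smul (ha t))
      simp only [id_eq, one_smul] at this
      exact this
    set G : ℝ → ℝ := fun t => t^2 * (Φ (x t) - Φ xstar) + (1/2) * ⟪w t, w t⟫
        + ((2*p*(α+1-4*p))/2) * ⟪z t, z t⟫ with hG_def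
    clear_value G
    have hGderiv : ∀ t, HasDerivAt G
        (((2:ℕ) * t^1 * (Φ (x t) - Φ xstar) + t^2 * ⟪g (x t), v t⟫)
          + (1/2) * (⟪w t, (2*p) • v t + (t • a t + v t)⟫ + ⟪(2*p) • v t + (t • a t + v t), w t⟫)
          + ((2*p*(α+1-4*p))/2) * (⟪z t, v t⟫ + ⟪v t, z t⟫)) t := by
      rw [hG_def]
      intro t
      exact (((hasDerivAt_pow 2 t).mul ((hphi t).sub_const (Φ xstar))).add
        (((hwderiv t).inner ℝ (hwderiv t)).const_mul _)).add
        (((hzderiv t).inner ℝ (hzderiv t)).const_mul _)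
    set E : ℝ → ℝ := fun t => t ^ (2*p-2) * G t with hE_def
    clear_value E
    have hEderiv : ∀ t : ℝ, 0 < t → HasDerivAt E
        ((2*p-2) * t ^ (2*p-2-1) * G t + t ^ (2*p-2) *
          (((2:ℕ) * t^1 * (Φ (x t) - Φ xstar) + t^2 * ⟪g (x t), v t⟫)
          + (1/2) * (⟪w t, (2*p) • v t + (t • a t + v t)⟫ + ⟪(2*p) • v t + (t • a t + v t), w t⟫)
          + ((2*p*(α+1-4*p))/2) * (⟪z t, v t⟫ + ⟪v t, z t⟫))) t := by
      rw [hE_def]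
      intro t ht
      exact (Real.hasDerivAt_rpow_const (Or.inl ht.ne')).mul (hGderiv t)
    have hmono : AntitoneOn E (Ici t₀) := by
      apply antitoneOn_of_deriv_nonpos (convex_Ici t₀)
      · intro t ht
        exact ((hEderiv t (lt_of_lt_of_le ht₀ ht)).continuousAt).continuousWithinAt
      · intro t ht
        rw [interior_Ici] at ht
        exact (hEderiv t (lt_trans ht₀ ht)).differentiableAt.differentiableWithinAt
      · intro t ht
        rw [interior_Ici] at ht
        have htpos : 0 < t := lt_trans ht₀ ht
        rw [(hEderiv t htpos).deriv]
        have hsplit : t ^ (2*p-2) = t ^ (2*p-2-1) * t := by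
          rw [← Real.rpow_add_one htpos.ne' (2*p-2-1)]; norm_num
        have htpow : 0 < t ^ (2*p-2-1) := Real.rpow_pos_of_pos htpos _
        rw [hodea t ht.le, hsplit]
        have hAzg := hzg t
        have hA : 0 ≤ Φ (x t) - Φ xstar := by linarith [hxstar (x t)]
        have hnv : 0 ≤ ⟪v t, v t⟫ := real_inner_self_nonneg
        have hnz : 0 ≤ ⟪z t, z t⟫ := real_inner_self_nonneg
        have hta : t • ((α / t) • v t) = α • v t := by
          rw [smul_smul, mul_div_cancel₀ _ htpos.ne']
        have hS : ((2*p-2) * (t ^ (2*p-2-1)) * G t + (t ^ (2*p-2-1) * t) *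
          (((2:ℕ) * t^1 * (Φ (x t) - Φ xstar) + t^2 * ⟪g (x t), v t⟫)
          + (1/2) * (⟪w t, (2*p) • v t + (t • (-((α / t) • v t) - g (x t)) + v t)⟫
              + ⟪(2*p) • v t + (t • (-((α / t) • v t) - g (x t)) + v t), w t⟫)
          + ((2*p*(α+1-4*p))/2) * (⟪z t, v t⟫ + ⟪v t, z t⟫)))
          = t ^ (2*p-2-1) * (
              - ((2*p) * (t^2 * (⟪z t, g (x t)⟫ - (Φ (x t) - Φ xstar))))
              - ((α - 3*p) * (t^2 * ⟪v t, v t⟫))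
              - ((1-p) * ((4*p^2 + 2*p*(α+1-4*p)) * ⟪z t, z t⟫))) := by
          simp only [hG_def, hw_def, smul_sub, smul_neg, hta, inner_add_left, inner_add_right,
            inner_sub_left, inner_sub_right, inner_neg_left, inner_neg_right,
            real_inner_smul_left, real_inner_smul_right,
            real_inner_comm (z t) (v t), real_inner_comm (z t) (g (x t)),
            real_inner_comm (v t) (g (x t))]
          ring
        rw [hS]
        apply mul_nonpos_of_nonneg_of_nonpos htpow.le
        have h1 : 0 ≤ (2*p) * (t^2 * (⟪z t, g (x t)⟫ - (Φ (x t) - Φ xstar))) := by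
          apply mul_nonneg (by linarith)
          exact mul_nonneg (sq_nonneg t) (by simpa [hz_def] using sub_nonneg.2 hAzg)
        have h2 : 0 ≤ (α - 3*p) * (t^2 * ⟪v t, v t⟫) :=
          mul_nonneg (by linarith) (mul_nonneg (sq_nonneg t) hnv)
        have h3 : 0 ≤ (1-p) * ((4*p^2 + 2*p*(α+1-4*p)) * ⟪z t, z t⟫) :=
          mul_nonneg (by linarith) (mul_nonneg (by nlinarith) hnz)
        linarith
    -- conclude
    have hGnonneg : ∀ t, 0 ≤ G t := by
      intro t
      have h1 : 0 ≤ Φ (x t) - Φ xstar := by linarith [hxstar (x t)]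
      have h2 : 0 ≤ ⟪w t, w t⟫ := real_inner_self_nonneg
      have h3 : 0 ≤ ⟪z t, z t⟫ := real_inner_self_nonneg
      simp only [hG_def]
      nlinarith [sq_nonneg t, mul_nonneg (sq_nonneg t) h1]
    have hK0 : 0 ≤ E t₀ := by
      have h2 : (0:ℝ) < t₀ ^ (2*p-2) := Real.rpow_pos_of_pos ht₀ _
      rw [hE_def]
      exact mul_nonneg h2.le (hGnonneg t₀)
    have hd : 0 < 4*p^2 + 2*p*(α+1-4*p) := by nlinarith
    refine ⟨Real.sqrt (2*(4*p^2 + 2*p*(α+1-4*p)) * E t₀ / (2*p*(α+1-4*p))),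
      Real.sqrt_nonneg _, ?_⟩
    intro t ht
    have htpos : 0 < t := lt_of_lt_of_le ht₀ ht
    have hEle : E t ≤ E t₀ := hmono self_mem_Ici ht ht
    -- triangle + Peter-Paul: c * t²‖v‖² ≤ 2(l²+c) * G t
    have hwn : ⟪w t, w t⟫ = ‖w t‖^2 := real_inner_self_eq_norm_sq _
    have hzn : ⟪z t, z t⟫ = ‖z t‖^2 := real_inner_self_eq_norm_sq _
    have htri : t * ‖v t‖ ≤ ‖w t‖ + (2*p) * ‖z t‖ := by
      have hwz : t • v t = w t - (2*p) • z t := by simp only [hw_def]; abel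
      calc t * ‖v t‖ = ‖t • v t‖ := by
            rw [norm_smul, Real.norm_eq_abs, abs_of_pos htpos]
        _ = ‖w t - (2*p) • z t‖ := by rw [hwz]
        _ ≤ ‖w t‖ + ‖(2*p) • z t‖ := norm_sub_le _ _
        _ = ‖w t‖ + (2*p) * ‖z t‖ := by
            rw [norm_smul, Real.norm_eq_abs, abs_of_pos (by linarith)]
    have htri2 : (t * ‖v t‖)^2 ≤ (‖w t‖ + (2*p) * ‖z t‖)^2 := by
      apply sq_le_sq' _ htri
      nlinarith [mul_nonneg htpos.le (norm_nonneg (v t)), norm_nonneg (w t), norm_nonneg (z t)]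
    have h1c : (2*p*(α+1-4*p)) * (t^2 * ‖v t‖^2) ≤
        (4*p^2 + 2*p*(α+1-4*p)) * ‖w t‖^2
          + (2*p*(α+1-4*p)) * (4*p^2 + 2*p*(α+1-4*p)) * ‖z t‖^2 := by
      nlinarith [mul_le_mul_of_nonneg_left htri2 hc.le,
        sq_nonneg ((2*p) * ‖w t‖ - (2*p*(α+1-4*p)) * ‖z t‖)]
    have hGge : (2*p*(α+1-4*p)) * (t^2 * ‖v t‖^2) ≤ (2*(4*p^2 + 2*p*(α+1-4*p))) * G t := by
      have h1 : 0 ≤ Φ (x t) - Φ xstar := by linarith [hxstar (x t)]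
      have hGform : G t = t^2*(Φ (x t) - Φ xstar) + (1/2)*‖w t‖^2
          + ((2*p*(α+1-4*p))/2)*‖z t‖^2 := by
        simp only [hG_def, hwn, hzn]
      rw [hGform]
      nlinarith [h1c, sq_nonneg t, mul_nonneg (sq_nonneg t) h1]
    have hrw : t ^ (2*p-2) * t^2 = t ^ (2*p) := by
      rw [show (t:ℝ)^2 = t ^ (2:ℝ) by norm_num [Real.rpow_natCast],
        ← Real.rpow_add htpos]
      norm_num
    have htp2 : (0:ℝ) < t ^ (2*p-2) := Real.rpow_pos_of_pos htpos _
    have hmain : (2*p*(α+1-4*p)) * (t ^ (2*p) * ‖v t‖^2) ≤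
        (2*(4*p^2 + 2*p*(α+1-4*p))) * E t₀ := by
      calc (2*p*(α+1-4*p)) * (t ^ (2*p) * ‖v t‖^2)
          = t ^ (2*p-2) * ((2*p*(α+1-4*p)) * (t^2 * ‖v t‖^2)) := by rw [← hrw]; ring
        _ ≤ t ^ (2*p-2) * ((2*(4*p^2 + 2*p*(α+1-4*p))) * G t) :=
            mul_le_mul_of_nonneg_left hGge htp2.le
        _ = (2*(4*p^2 + 2*p*(α+1-4*p))) * (t ^ (2*p-2) * G t) := by ring
        _ ≤ (2*(4*p^2 + 2*p*(α+1-4*p))) * E t₀ := by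
            have hEE : t ^ (2*p-2) * G t = E t := by rw [hE_def]
            rw [hEE]
            exact mul_le_mul_of_nonneg_left hEle (by linarith)
    have htp : 0 < t ^ p := Real.rpow_pos_of_pos htpos p
    have htpp : t ^ p * t ^ p = t ^ (2*p) := by
      rw [← Real.rpow_add htpos]; ring_nf
    have hM2 : (‖v t‖ * t ^ p)^2 ≤
        Real.sqrt (2*(4*p^2 + 2*p*(α+1-4*p)) * E t₀ / (2*p*(α+1-4*p)))^2 := by
      rw [Real.sq_sqrt (div_nonneg (mul_nonneg (by linarith) hK0) hc.le)]
      have hexp : (‖v t‖ * t ^ p)^2 = t ^ (2*p) * ‖v t‖^2 := by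
        rw [← htpp]; ring
      rw [le_div_iff₀ hc, hexp]
      nlinarith [hmain]
    have hfin : ‖v t‖ * t ^ p ≤
        Real.sqrt (2*(4*p^2 + 2*p*(α+1-4*p)) * E t₀ / (2*p*(α+1-4*p))) := by
      nlinarith [mul_nonneg (norm_nonneg (v t)) htp.le, Real.sqrt_nonneg
        (2*(4*p^2 + 2*p*(α+1-4*p)) * E t₀ / (2*p*(α+1-4*p)))]
    rw [le_div_iff₀ htp]
    exact hfin
end

section
/- Suppose α > 3. Then the values converge faster than 1/t²: Φ(x(t)) − inf Φ = o(1/t²) as t → +∞, i.e. t²·(Φ(x(t)) − inf Φ) → 0 as t → +∞. -/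
open Filter Set intervalIntegral Real

local notation "⟪" x ", " y "⟫" => @inner ℝ _ _ x y

/-- The gradient inequality for convex functions: the graph lies above tangent planes. -/
lemma stmt7_grad_ineq {H : Type*} [NormedAddCommGroup H] [InnerProductSpace ℝ H] [CompleteSpace H]
    (Φ : H → ℝ) (hconv : ConvexOn ℝ Set.univ Φ) {p gp : H}
    (hg : HasGradientAt Φ gp p) (y : H) : Φ p + ⟪gp, y - p⟫ ≤ Φ y := by
  rcases eq_or_ne y p with rfl | hne
  · simp
  · set f : ℝ → ℝ := fun s => Φ (AffineMap.lineMap p y s) with hf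
    have hconvf : ConvexOn ℝ Set.univ f := by
      have := hconv.comp_affineMap (AffineMap.lineMap p y)
      simpa [hf, Function.comp_def] using this
    have hline : HasDerivAt (fun s : ℝ => AffineMap.lineMap p y s) (y - p) 0 := by
      have h1 : HasDerivAt (fun s : ℝ => (1 - s) • p + s • y) ((-1 : ℝ) • p + (1 : ℝ) • y) 0 :=
        (((hasDerivAt_id (0:ℝ)).const_sub 1).smul_const p).add ((hasDerivAt_id (0:ℝ)).smul_const y)
      have : ((-1 : ℝ) • p + (1 : ℝ) • y) = y - p := by
        simp [neg_smul, one_smul]; abel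
      rw [this] at h1
      convert h1 using 2 with s
      simp [AffineMap.lineMap_apply_module]
    have hd : HasDerivAt f ⟪gp, y - p⟫ 0 := by
      have hg' : HasFDerivAt Φ ((InnerProductSpace.toDual ℝ H) gp) ((AffineMap.lineMap p y) (0:ℝ)) := by
        simpa using hasGradientAt_iff_hasFDerivAt.1 hg
      have h2 := hg'.comp_hasDerivAt 0 (by simpa using hline)
      simpa [hf, InnerProductSpace.toDual_apply_apply, Function.comp_def] using h2
    have hslope := hconvf.le_slope_of_hasDerivAt (Set.mem_univ (0:ℝ)) (Set.mem_univ (1:ℝ))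
      one_pos hd
    have heq : slope f 0 1 = Φ y - Φ p := by
      simp [slope, hf, AffineMap.lineMap_apply_module]
    rw [heq] at hslope
    linarith

/-- A function monotone and bounded above on `[a, ∞)` converges at `+∞`. -/
lemma stmt7_exists_tendsto_of_monotoneOn {f : ℝ → ℝ} {a M : ℝ}
    (hm : MonotoneOn f (Set.Ici a)) (hb : ∀ t, a ≤ t → f t ≤ M) :
    ∃ L, Filter.Tendsto f Filter.atTop (nhds L) := by
  set F : ℝ → ℝ := fun t => f (max t a) with hF
  have hFm : Monotone F := fun s t hst =>
    hm (Set.mem_Ici.2 (le_max_right _ _)) (Set.mem_Ici.2 (le_max_right _ _)) (max_le_max hst le_rfl)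
  have hbdd : BddAbove (Set.range F) := by
    refine ⟨M, ?_⟩
    rintro _ ⟨t, rfl⟩
    exact hb _ (le_max_right _ _)
  refine ⟨⨆ t, F t, (tendsto_atTop_ciSup hFm hbdd).congr' ?_⟩
  filter_upwards [eventually_ge_atTop a] with t ht
  simp [hF, max_eq_left ht]

set_option maxHeartbeats 1600000 in
/-- for `α > 3`, the values along any trajectory of `(AVD)_α`
satisfy `Φ(x(t)) - inf Φ = o(1/t²)`, i.e. `t² (Φ(x(t)) - inf Φ) → 0`. -/
theorem stmt_7
    {H : Type*} [NormedAddCommGroup H] [InnerProductSpace ℝ H] [CompleteSpace H]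
    (Φ : H → ℝ) (hΦconv : ConvexOn ℝ Set.univ Φ) (hΦC1 : ContDiff ℝ 1 Φ)
    (xstar : H) (hxstar : ∀ y : H, Φ xstar ≤ Φ y)
    (α t₀ : ℝ) (hα : 3 < α) (ht₀ : 0 < t₀)
    (x : ℝ → H) (hx : ContDiff ℝ 2 x)
    (hode : ∀ t : ℝ, t₀ ≤ t →
      deriv (deriv x) t + (α / t) • deriv x t + gradient Φ (x t) = 0) :
    Filter.Tendsto (fun t : ℝ => t ^ 2 * (Φ (x t) - Φ xstar))
      Filter.atTop (nhds 0) := by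
  -- constants
  set lam : ℝ := (α + 1) / 2 with hlamdef
  set c : ℝ := (α - 3) / 2 with hcdef
  have hcpos : 0 < c := by rw [hcdef]; linarith
  have hlampos : 0 < lam := by rw [hlamdef]; linarith
  -- basic functions
  set v : ℝ → H := deriv x with hvdef
  set a : ℝ → H := deriv v with hadef
  set g : ℝ → H := fun t => gradient Φ (x t) with hgdef
  set θ : ℝ → ℝ := fun t => Φ (x t) - Φ xstar with hθdef
  set d : ℝ → H := fun t => x t - xstar with hddef
  clear_value lam c a v g θ d
  -- differentiability of x and v
  have hxdiff : Differentiable ℝ x := hx.differentiable two_ne_zero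
  have hvC1 : ContDiff ℝ 1 v := by
    rw [hvdef]
    have := (contDiff_succ_iff_deriv (n := 1)).1 (by exact_mod_cast hx)
    exact this.2.2
  have hvdiff : Differentiable ℝ v := hvC1.differentiable one_ne_zero
  have hΦdiff : Differentiable ℝ Φ := hΦC1.differentiable one_ne_zero
  have hxd : ∀ t, HasDerivAt x (v t) t := fun t => by
    rw [hvdef]; exact (hxdiff t).hasDerivAt
  have hvd : ∀ t, HasDerivAt v (a t) t := fun t => by
    rw [hadef]; exact (hvdiff t).hasDerivAt
  have hgrad : ∀ t, HasGradientAt Φ (g t) (x t) := fun t => by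
    rw [hgdef]; exact (hΦdiff (x t)).hasGradientAt
  -- continuity
  have hxc : Continuous x := hx.continuous
  have hvc : Continuous v := by rw [hvdef]; exact hx.continuous_deriv one_le_two
  have hθc : Continuous θ := by rw [hθdef]; exact (hΦC1.continuous.comp hxc).sub continuous_const
  have hdc : Continuous d := by rw [hddef]; exact hxc.sub continuous_const
  -- derivative facts
  have hθd : ∀ t, HasDerivAt θ ⟪g t, v t⟫ t := by
    intro t
    rw [hθdef]
    have h1 : HasFDerivAt Φ (InnerProductSpace.toDual ℝ H (g t)) (x t) :=
      hasGradientAt_iff_hasFDerivAt.1 (hgrad t)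
    have h2 := h1.comp_hasDerivAt t (hxd t)
    have h3 : HasDerivAt (fun s => Φ (x s)) ⟪g t, v t⟫ t := by
      simpa [InnerProductSpace.toDual_apply_apply, Function.comp_def] using h2
    exact h3.sub_const _
  have hdd : ∀ t, HasDerivAt d (v t) t := fun t => by
    rw [hddef]; exact (hxd t).sub_const _
  have hθ0 : ∀ t, 0 ≤ θ t := fun t => by rw [hθdef]; exact sub_nonneg.2 (hxstar _)
  -- ode rewritten
  have hodeA : ∀ t, t₀ ≤ t → a t = -((α / t) • v t) - g t := by
    intro t ht
    have h := hode t ht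
    simp only [hgdef]
    linear_combination (norm := module) h
  -- convexity inequality
  have hconvineq : ∀ t, θ t ≤ ⟪g t, d t⟫ := by
    intro t
    have h := stmt7_grad_ineq Φ hΦconv (hgrad t) xstar
    have h2 : ⟪g t, xstar - x t⟫ = -⟪g t, x t - xstar⟫ := by
      rw [← inner_neg_right]; congr 1; abel
    simp only [hθdef, hddef]
    rw [h2] at h
    linarith
  -- the auxiliary vector b and its derivative
  set b : ℝ → H := fun t => lam • d t + t • v t with hbdef
  clear_value b
  have hbc : Continuous b := by
    rw [hbdef]; exact (hdc.const_smul lam).add (continuous_id.smul hvc)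
  have hbd : ∀ t, t₀ ≤ t → HasDerivAt b ((lam + 1 - α) • v t - t • g t) t := by
    intro t ht
    have htpos : 0 < t := lt_of_lt_of_le ht₀ ht
    have h1 : HasDerivAt b (lam • v t + (t • a t + (1:ℝ) • v t)) t := by
      rw [hbdef]
      exact ((hdd t).const_smul lam).add (by have hs : HasDerivAt (fun y : ℝ => y • v y) (t • a t + (1:ℝ) • v t) t := (hasDerivAt_id' t).smul (hvd t); exact hs)
    convert h1 using 1
    rw [hodeA t ht]
    have hsc : t * (α / t) = α := by field_simp
    rw [smul_sub, smul_neg, smul_smul, hsc]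
    module
  -- energy function E
  set E : ℝ → ℝ := fun t => t^2 * θ t + (1/2) * ⟪b t, b t⟫ + (lam * c / 2) * ⟪d t, d t⟫
    with hEdef
  clear_value E
  set eE : ℝ → ℝ := fun t => ((2:ℕ) * t^1 * θ t + t^2 * ⟪g t, v t⟫)
      + (1/2) * (⟪b t, (lam + 1 - α) • v t - t • g t⟫ + ⟪(lam + 1 - α) • v t - t • g t, b t⟫)
      + (lam * c / 2) * (⟪d t, v t⟫ + ⟪v t, d t⟫) with heEdef
  clear_value eE
  have hEc : Continuous E := by
    rw [hEdef]
    exact (((continuous_pow 2).mul hθc).add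
      (continuous_const.mul (hbc.inner hbc))).add (continuous_const.mul (hdc.inner hdc))
  have hEd : ∀ t, t₀ ≤ t → HasDerivAt E (eE t) t := by
    intro t ht
    simp only [hEdef, heEdef]
    exact (((hasDerivAt_pow 2 t).mul (hθd t)).add
      ((HasDerivAt.inner ℝ (hbd t ht) (hbd t ht)).const_mul (1/2))).add
      ((HasDerivAt.inner ℝ (hdd t) (hdd t)).const_mul (lam * c / 2))
  have hEnonneg : ∀ t, 0 ≤ E t := by
    intro t
    simp only [hEdef]
    have h1 : (0:ℝ) ≤ ⟪b t, b t⟫ := real_inner_self_nonneg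
    have h2 : (0:ℝ) ≤ ⟪d t, d t⟫ := real_inner_self_nonneg
    have h3 := hθ0 t
    have h4 : (0:ℝ) ≤ t^2 := sq_nonneg t
    have h5 : (0:ℝ) < lam * c / 2 := div_pos (mul_pos hlampos hcpos) two_pos
    exact add_nonneg (add_nonneg (mul_nonneg h4 h3) (mul_nonneg (by norm_num) h1))
      (mul_nonneg h5.le h2)
  -- the integrand i and integral I
  set i : ℝ → ℝ := fun t => t * (θ t + ⟪v t, v t⟫) with hidef
  clear_value i
  have hic : Continuous i := by
    rw [hidef]; exact continuous_id.mul (hθc.add (hvc.inner hvc))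
  have hinonneg : ∀ t, 0 ≤ t → 0 ≤ i t := by
    intro t ht
    simp only [hidef]
    exact mul_nonneg ht (add_nonneg (hθ0 t) real_inner_self_nonneg)
  set I : ℝ → ℝ := fun t => ∫ s in t₀..t, i s with hIdef
  clear_value I
  have hId : ∀ t, HasDerivAt I (i t) t := by
    intro t
    rw [hIdef]
    exact intervalIntegral.integral_hasDerivAt_right (hic.intervalIntegrable _ _)
      (hic.stronglyMeasurableAtFilter _ _) hic.continuousAt
  have hIc : Continuous I := by
    have : Differentiable ℝ I := fun t => (hId t).differentiableAt
    exact this.continuous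
  have hI0 : I t₀ = 0 := by rw [hIdef]; simp
  -- key differential inequality
  have hkey : ∀ t, t₀ < t → eE t + c * i t ≤ 0 := by
    intro t ht
    have htpos : 0 < t := lt_trans ht₀ ht
    have h1 := hconvineq t
    have hvv : (0:ℝ) ≤ ⟪v t, v t⟫ := real_inner_self_nonneg
    have hθt := hθ0 t
    simp only [heEdef, hidef, hbdef, inner_add_left, inner_add_right, inner_sub_left,
      inner_sub_right, real_inner_smul_left, real_inner_smul_right]
    rw [hlamdef, hcdef]
    have e1 : ⟪d t, g t⟫ = ⟪g t, d t⟫ := real_inner_comm _ _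
    have e2 : ⟪d t, v t⟫ = ⟪v t, d t⟫ := real_inner_comm _ _
    have e3 : ⟪v t, g t⟫ = ⟪g t, v t⟫ := real_inner_comm _ _
    rw [e1, e2, e3]
    nlinarith [mul_nonneg (mul_nonneg (by linarith : (0:ℝ) ≤ (α+1)/2) htpos.le)
      (sub_nonneg.2 h1)]
  -- E + c I is antitone on [t₀, ∞)
  have hPanti : AntitoneOn (fun t => E t + c * I t) (Ici t₀) := by
    apply antitoneOn_of_deriv_nonpos (convex_Ici t₀)
      ((hEc.add (continuous_const.mul hIc)).continuousOn)
    · rw [interior_Ici]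
      exact fun t ht => (((hEd t (le_of_lt ht)).add
        ((hId t).const_mul c)).differentiableAt).differentiableWithinAt
    · rw [interior_Ici]
      intro t ht
      rw [show deriv (E + (fun _ => c) * I) t = eE t + c * i t from ((hEd t ht.le).add ((hId t).const_mul c)).deriv]
      exact hkey t ht
  -- bound on I
  have hIbound : ∀ t, t₀ ≤ t → I t ≤ E t₀ / c := by
    intro t ht
    have h := hPanti self_mem_Ici ht ht
    simp only [] at h
    rw [hI0] at h
    have h2 := hEnonneg t
    rw [le_div_iff₀ hcpos]
    nlinarith
  -- I is monotone on [t₀, ∞), hence converges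
  have hImono : MonotoneOn I (Ici t₀) := by
    apply monotoneOn_of_deriv_nonneg (convex_Ici t₀) hIc.continuousOn
      (fun t _ => (hId t).differentiableAt.differentiableWithinAt)
    rw [interior_Ici]
    intro t ht
    rw [(hId t).deriv]
    exact hinonneg t (le_of_lt (lt_trans ht₀ ht))
  obtain ⟨LI, hLI⟩ := stmt7_exists_tendsto_of_monotoneOn hImono hIbound
  -- the function G
  set G : ℝ → ℝ := fun t => t^2 * θ t + t^2/2 * ⟪v t, v t⟫ with hGdef
  clear_value G
  have hGc : Continuous G := by
    rw [hGdef]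
    exact ((continuous_pow 2).mul hθc).add (((continuous_pow 2).div_const 2).mul (hvc.inner hvc))
  have hGnonneg : ∀ t, 0 ≤ G t := by
    intro t
    simp only [hGdef]
    have h1 : (0:ℝ) ≤ ⟪v t, v t⟫ := real_inner_self_nonneg
    have h2 : (0:ℝ) ≤ t^2/2 := by positivity
    exact add_nonneg (mul_nonneg (sq_nonneg t) (hθ0 t)) (mul_nonneg h2 h1)
  have hGd : ∀ t, t₀ < t → HasDerivAt G (2*t*θ t + (1-α)*(t*⟪v t, v t⟫)) t := by
    intro t ht
    have htpos : 0 < t := lt_trans ht₀ ht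
    have h3 := ((hasDerivAt_pow 2 t).mul (hθd t)).add
      (((hasDerivAt_pow 2 t).div_const 2).mul (HasDerivAt.inner ℝ (hvd t) (hvd t)))
    rw [hGdef]
    refine h3.congr_deriv ?_
    rw [hodeA t ht.le]
    simp only [inner_sub_right, inner_sub_left, inner_neg_right, inner_neg_left,
      real_inner_smul_left, real_inner_smul_right]
    rw [real_inner_comm (v t) (g t)]
    field_simp
    ring
  -- G - 2I is antitone, so G is bounded; G + (α+1) I is monotone
  have hRanti : AntitoneOn (fun t => G t - 2 * I t) (Ici t₀) := by
    apply antitoneOn_of_deriv_nonpos (convex_Ici t₀)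
      ((hGc.sub (continuous_const.mul hIc)).continuousOn)
    · rw [interior_Ici]
      exact fun t ht => (((hGd t ht).sub
        ((hId t).const_mul 2)).differentiableAt).differentiableWithinAt
    · rw [interior_Ici]
      intro t ht
      rw [show deriv (G - (fun _ => 2) * I) t = 2*t*θ t + (1-α)*(t*⟪v t, v t⟫) - 2 * i t from ((hGd t ht).sub ((hId t).const_mul 2)).deriv]
      have htpos : 0 < t := lt_trans ht₀ ht
      have hvv : (0:ℝ) ≤ ⟪v t, v t⟫ := real_inner_self_nonneg
      simp only [hidef]
      nlinarith [mul_nonneg htpos.le hvv, hθ0 t]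
  have hGbound : ∀ t, t₀ ≤ t → G t ≤ G t₀ + 2 * (E t₀ / c) := by
    intro t ht
    have h := hRanti self_mem_Ici ht ht
    simp only [] at h
    rw [hI0] at h
    have h2 := hIbound t ht
    nlinarith
  set Q : ℝ → ℝ := fun t => G t + (α + 1) * I t with hQdef
  clear_value Q
  have hQmono : MonotoneOn Q (Ici t₀) := by
    rw [hQdef]
    apply monotoneOn_of_deriv_nonneg (convex_Ici t₀)
      ((hGc.add (continuous_const.mul hIc)).continuousOn)
    · rw [interior_Ici]
      exact fun t ht => (((hGd t ht).add
        ((hId t).const_mul (α+1))).differentiableAt).differentiableWithinAt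
    · rw [interior_Ici]
      intro t ht
      rw [show deriv (G + (fun _ => α + 1) * I) t = 2*t*θ t + (1-α)*(t*⟪v t, v t⟫) + (α+1) * i t from ((hGd t ht).add ((hId t).const_mul (α+1))).deriv]
      have htpos : 0 < t := lt_trans ht₀ ht
      have hvv : (0:ℝ) ≤ ⟪v t, v t⟫ := real_inner_self_nonneg
      simp only [hidef]
      nlinarith [mul_nonneg htpos.le hvv, mul_nonneg htpos.le (hθ0 t)]
  have hQbound : ∀ t, t₀ ≤ t → Q t ≤ G t₀ + 2 * (E t₀ / c) + (α + 1) * (E t₀ / c) := by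
    intro t ht
    simp only [hQdef]
    have h1 := hGbound t ht
    have h2 := hIbound t ht
    nlinarith [hα]
  obtain ⟨LQ, hLQ⟩ := stmt7_exists_tendsto_of_monotoneOn hQmono hQbound
  -- G converges to L := LQ - (α+1) LI
  have hGtend : Tendsto G atTop (nhds (LQ - (α + 1) * LI)) := by
    have h := hLQ.sub (hLI.const_mul (α + 1))
    have heq : (fun t => Q t - (α + 1) * I t) = G := by
      funext t; simp only [hQdef]; ring
    rwa [heq] at h
  have hLnonneg : 0 ≤ LQ - (α + 1) * LI :=
    ge_of_tendsto hGtend (Eventually.of_forall hGnonneg)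
  -- the limit is zero
  have hLzero : LQ - (α + 1) * LI = 0 := by
    rcases eq_or_lt_of_le hLnonneg with heq | hpos
    · exact heq.symm
    · exfalso
      set L : ℝ := LQ - (α + 1) * LI with hLdef
      have hev : ∀ᶠ t in atTop, L / 2 < G t :=
        hGtend.eventually_const_lt (by linarith)
      obtain ⟨T0, hT0⟩ := eventually_atTop.1 hev
      set T : ℝ := max T0 (max t₀ 1) with hTdef
      have hTt₀ : t₀ ≤ T := le_max_of_le_right (le_max_left _ _)
      have hTpos : 0 < T := lt_of_lt_of_le one_pos (le_max_of_le_right (le_max_right _ _))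
      have hGT : ∀ s, T ≤ s → L / 2 < G s := fun s hs =>
        hT0 s (le_trans (le_max_left _ _) hs)
      set e : ℝ := (E t₀ / c - I T + 1) * (2 / L) with hedef
      have hITb := hIbound T hTt₀
      have hepos : 0 < e := by
        rw [hedef]
        apply mul_pos (by linarith) (div_pos two_pos hpos)
      set t1 : ℝ := T * Real.exp e with ht1def
      have ht1T : T ≤ t1 := by
        rw [ht1def]
        nlinarith [Real.one_le_exp hepos.le]
      have ht1pos : 0 < t1 := lt_of_lt_of_le hTpos ht1T
      have hlog : Real.log (t1 / T) = e := by
        rw [ht1def, mul_comm, mul_div_assoc, div_self (ne_of_gt hTpos), mul_one, Real.log_exp]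
      have hIsplit : I t1 = I T + ∫ s in T..t1, i s := by
        simp only [hIdef]
        exact (intervalIntegral.integral_add_adjacent_intervals
          (hic.intervalIntegrable t₀ T) (hic.intervalIntegrable T t1)).symm
      have hmono : (∫ s in T..t1, (L/2) * (1/s)) ≤ ∫ s in T..t1, i s := by
        apply intervalIntegral.integral_mono_on ht1T
        · apply ContinuousOn.intervalIntegrable
          apply ContinuousOn.mul continuousOn_const
          apply ContinuousOn.div continuousOn_const continuousOn_id
          intro s hs
          rw [uIcc_of_le ht1T] at hs
          exact ne_of_gt (lt_of_lt_of_le hTpos hs.1)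
        · exact hic.intervalIntegrable _ _
        · intro s hs
          have hsT : T ≤ s := hs.1
          have hspos : 0 < s := lt_of_lt_of_le hTpos hsT
          have hGs : L / 2 < G s := hGT s hsT
          have hGi : G s ≤ s * i s := by
            simp only [hGdef, hidef]
            nlinarith [mul_nonneg (mul_nonneg hspos.le hspos.le)
              (real_inner_self_nonneg (x := v s))]
          rw [mul_one_div, div_le_iff₀ hspos]
          linarith [hGi, hGs, (mul_comm (i s) s : i s * s = s * i s)]
      have hlowint : (∫ s in T..t1, (L/2) * (1/s)) = (L/2) * e := by
        rw [intervalIntegral.integral_const_mul, integral_one_div, hlog]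
        rw [uIcc_of_le ht1T]
        intro h0
        exact absurd h0.1 (not_le.2 hTpos)
      have hLe : (L/2) * e = E t₀ / c - I T + 1 := by
        rw [hedef]
        field_simp [hpos.ne']
      have hcontr := hIbound t1 (le_trans hTt₀ ht1T)
      rw [hIsplit] at hcontr
      rw [hlowint, hLe] at hmono
      linarith
  rw [hLzero] at hGtend
  -- squeeze
  have hgoal_eq : ∀ t : ℝ, t ^ 2 * (Φ (x t) - Φ xstar) = t ^ 2 * θ t := by
    intro t; rw [hθdef]
  refine tendsto_of_tendsto_of_tendsto_of_le_of_le tendsto_const_nhds hGtend ?_ ?_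
  · intro t
    simp only []
    rw [hgoal_eq t]
    exact mul_nonneg (sq_nonneg t) (hθ0 t)
  · intro t
    simp only []
    rw [hgoal_eq t]
    simp only [hGdef]
    nlinarith [mul_nonneg (sq_nonneg t) (real_inner_self_nonneg (x := v t))]
end

section
/- Suppose H is finite dimensional and α = 3, and set S = argmin Φ. Then: (i) the trajectory x is bounded and dist(x(t), S) → 0 as t → +∞; (ii) moreover, if there exists t₁ ≥ t₀ such that x(t) ∈ S for all t ≥ t₁, then x(t) converges (in norm), as t → +∞, to a point of S. -/
open Set Filter Metric

local notation "⟪" a ", " b "⟫" => @inner ℝ _ _ a b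

section Aux

variable {H : Type*} [NormedAddCommGroup H] [InnerProductSpace ℝ H] [CompleteSpace H]

lemma aux_grad_convex (Φ : H → ℝ) (hconv : ConvexOn ℝ Set.univ Φ)
    (hd : Differentiable ℝ Φ) (p q : H) :
    Φ p + ⟪gradient Φ p, q - p⟫ ≤ Φ q := by
  set c : ℝ → H := fun s => p + s • (q - p) with hc_def
  have hc : ∀ s : ℝ, HasDerivAt c (q - p) s := fun s => by
    simpa [hc_def] using ((hasDerivAt_id s).smul_const (q - p)).const_add p
  have hg : ∀ s : ℝ, HasDerivAt (fun s => Φ (c s)) ⟪gradient Φ (c s), q - p⟫ s := fun s => by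
    have hf := (hd (c s)).hasGradientAt
    rw [hasGradientAt_iff_hasFDerivAt] at hf
    simpa [InnerProductSpace.toDual_apply_apply, Function.comp_def] using hf.comp_hasDerivAt s (hc s)
  have hconv' : ConvexOn ℝ Set.univ (fun s : ℝ => Φ (c s)) := by
    have h := hconv.comp_affineMap (AffineMap.lineMap p q : ℝ →ᵃ[ℝ] H)
    have he : (Φ ∘ (AffineMap.lineMap p q : ℝ →ᵃ[ℝ] H)) = fun s : ℝ => Φ (c s) := by
      funext s
      simp [hc_def, AffineMap.lineMap_apply, add_comm]
    rw [he] at h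
    simpa using h
  have key := hconv'.le_slope_of_hasDerivAt (Set.mem_univ (0:ℝ)) (Set.mem_univ (1:ℝ))
    one_pos (hg 0)
  have hc0 : c 0 = p := by simp [hc_def]
  have hc1 : c 1 = q := by simp [hc_def]
  rw [slope_def_field] at key
  simp [hc0, hc1] at key
  have e : ⟪gradient Φ p, q - p⟫ = fderiv ℝ Φ p q - fderiv ℝ Φ p p := by
    simp [gradient, inner_sub_right]
  linarith

lemma aux_const_on_Ici {f : ℝ → H} {a : ℝ}
    (hf : ∀ t ∈ Set.Ici a, HasDerivAt f 0 t) : ∀ t ∈ Set.Ici a, f t = f a := by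
  intro t ht
  have := Convex.norm_image_sub_le_of_norm_hasDerivWithin_le (C := 0)
    (f' := fun _ => (0:H)) (fun s hs => (hf s hs).hasDerivWithinAt)
    (fun s _ => by simp) (convex_Ici a) (Set.self_mem_Ici) ht
  simpa [sub_eq_zero] using this

end Aux

/-- in finite dimension and for `α = 3`, the trajectory of
`(AVD)_3` is bounded and `dist(x(t), S) → 0`; moreover, if the trajectory
eventually lies in `S = argmin Φ`, then it converges to a point of `S`. -/
theorem stmt_9
    {H : Type*} [NormedAddCommGroup H] [InnerProductSpace ℝ H]
    [FiniteDimensional ℝ H] [CompleteSpace H]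
    (Φ : H → ℝ) (hΦconv : ConvexOn ℝ Set.univ Φ) (hΦC1 : ContDiff ℝ 1 Φ)
    (S : Set H) (hS : S = {z : H | ∀ y : H, Φ z ≤ Φ y}) (hSne : S.Nonempty)
    (t₀ : ℝ) (ht₀ : 0 < t₀)
    (x : ℝ → H) (hx : ContDiff ℝ 2 x)
    (hode : ∀ t : ℝ, t₀ ≤ t →
      deriv (deriv x) t + ((3 : ℝ) / t) • deriv x t + gradient Φ (x t) = 0) :
    (∃ B : ℝ, ∀ t : ℝ, t₀ ≤ t → ‖x t‖ ≤ B) ∧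
    Filter.Tendsto (fun t : ℝ => Metric.infDist (x t) S) Filter.atTop (nhds 0) ∧
    ((∃ t₁ : ℝ, t₀ ≤ t₁ ∧ ∀ t : ℝ, t₁ ≤ t → x t ∈ S) →
      ∃ xs ∈ S, Filter.Tendsto x Filter.atTop (nhds xs)) := by
  -- basic differentiability facts
  have hΦd : Differentiable ℝ Φ := hΦC1.differentiable one_ne_zero
  have hΦc : Continuous Φ := hΦC1.continuous
  have hx1 : Differentiable ℝ x := hx.differentiable (by norm_num)
  have hxderiv : ContDiff ℝ 1 (deriv x) := by
    have hx' : ContDiff ℝ ((1 : WithTop ℕ∞) + 1) x := by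
      convert hx using 2
      norm_num
    exact (contDiff_succ_iff_deriv.mp hx').2.2
  have hx2 : Differentiable ℝ (deriv x) := hxderiv.differentiable one_ne_zero
  obtain ⟨z, hzS⟩ := hSne
  have hz : ∀ y, Φ z ≤ Φ y := by rw [hS] at hzS; exact hzS
  have hxd : ∀ t, HasDerivAt x (deriv x t) t := fun t => (hx1 t).hasDerivAt
  have hgd : ∀ t, HasDerivAt (deriv x) (deriv (deriv x) t) t := fun t => (hx2 t).hasDerivAt
  have hΦx : ∀ t, HasDerivAt (fun s => Φ (x s)) ⟪gradient Φ (x t), deriv x t⟫ t := fun t => by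
    have hf := (hΦd (x t)).hasGradientAt
    rw [hasGradientAt_iff_hasFDerivAt] at hf
    simpa [InnerProductSpace.toDual_apply_apply, Function.comp_def] using hf.comp_hasDerivAt t (hxd t)
  set v : ℝ → H := fun t => (2:ℝ) • (x t - z) + t • deriv x t with hv_def
  have hvd : ∀ t, HasDerivAt v ((3:ℝ) • deriv x t + t • deriv (deriv x) t) t := fun t => by
    have h1 : HasDerivAt (fun s => (2:ℝ) • (x s - z)) ((2:ℝ) • deriv x t) t :=
      ((hxd t).sub_const z).const_smul 2
    have h2 : HasDerivAt (fun s : ℝ => s • deriv x s)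
        (t • deriv (deriv x) t + (1:ℝ) • deriv x t) t := (hasDerivAt_id t).smul (hgd t)
    refine (h1.add h2).congr_deriv ?_
    module
  set E : ℝ → ℝ := fun t => t^2 * (Φ (x t) - Φ z) + (1/2) * ⟪v t, v t⟫ with hE_def
  have hEd : ∀ t, HasDerivAt E
      ((2*t) * (Φ (x t) - Φ z) + t^2 * ⟪gradient Φ (x t), deriv x t⟫
        + (1/2) * (⟪v t, (3:ℝ) • deriv x t + t • deriv (deriv x) t⟫
          + ⟪(3:ℝ) • deriv x t + t • deriv (deriv x) t, v t⟫)) t := fun t => by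
    have hp : HasDerivAt (fun s : ℝ => s^2) (2*t) t := by
      simpa using hasDerivAt_pow 2 t
    have hq : HasDerivAt (fun s => Φ (x s) - Φ z) ⟪gradient Φ (x t), deriv x t⟫ t :=
      (hΦx t).sub_const _
    have hA : HasDerivAt (fun s : ℝ => s^2 * (Φ (x s) - Φ z))
        ((2*t) * (Φ (x t) - Φ z) + t^2 * ⟪gradient Φ (x t), deriv x t⟫) t := by
      exact hp.mul hq
    have hB : HasDerivAt (fun s => (1/2 : ℝ) * ⟪v s, v s⟫)
        ((1/2) * (⟪v t, (3:ℝ) • deriv x t + t • deriv (deriv x) t⟫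
          + ⟪(3:ℝ) • deriv x t + t • deriv (deriv x) t, v t⟫)) t :=
      (HasDerivAt.inner ℝ (hvd t) (hvd t)).const_mul (1/2)
    exact hA.add hB
  have hEanti : AntitoneOn E (Set.Ici t₀) := by
    apply antitoneOn_of_deriv_nonpos (convex_Ici t₀)
    · exact Continuous.continuousOn
        (continuous_iff_continuousAt.2 fun t => (hEd t).differentiableAt.continuousAt)
    · intro t _
      exact (hEd t).differentiableAt.differentiableWithinAt
    · intro t ht
      rw [interior_Ici] at ht
      have htpos : 0 < t := lt_trans ht₀ ht
      rw [(hEd t).deriv]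
      have hode' := hode t (le_of_lt ht)
      have hA : deriv (deriv x) t = -((3/t) • deriv x t + gradient Φ (x t)) := by
        rw [add_assoc] at hode'
        exact eq_neg_of_add_eq_zero_left hode'
      have hv' : (3:ℝ) • deriv x t + t • deriv (deriv x) t = -(t • gradient Φ (x t)) := by
        rw [hA, smul_neg, smul_add, smul_smul]
        have h3 : t * (3/t) = 3 := by field_simp
        rw [h3]
        module
      rw [hv']
      have c1 : ⟪v t, -(t • gradient Φ (x t))⟫
          = -(2*t*⟪gradient Φ (x t), x t - z⟫) - t^2*⟪gradient Φ (x t), deriv x t⟫ := by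
        simp only [hv_def, inner_neg_right, inner_add_left, real_inner_smul_left,
          real_inner_smul_right, real_inner_comm (x t - z), real_inner_comm (deriv x t)]
        ring
      have c2 : ⟪-(t • gradient Φ (x t)), v t⟫ = ⟪v t, -(t • gradient Φ (x t))⟫ :=
        real_inner_comm _ _
      rw [c2, c1]
      have hb : Φ (x t) - Φ z ≤ ⟪gradient Φ (x t), x t - z⟫ := by
        have hkey := aux_grad_convex Φ hΦconv hΦd (x t) z
        have h2 : ⟪gradient Φ (x t), z - x t⟫ = -⟪gradient Φ (x t), x t - z⟫ := by
          rw [show z - x t = -(x t - z) by abel, inner_neg_right]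
        rw [h2] at hkey
        linarith
      nlinarith [mul_le_mul_of_nonneg_left hb (le_of_lt htpos)]
  have hEbound : ∀ t, t₀ ≤ t → E t ≤ E t₀ := fun t ht =>
    hEanti Set.self_mem_Ici ht ht
  have hΦnn : ∀ t, (0:ℝ) ≤ Φ (x t) - Φ z := fun t => sub_nonneg.2 (hz (x t))
  obtain ⟨E0, hkey⟩ : ∃ r : ℝ, ∀ t, t₀ ≤ t →
      t^2 * (Φ (x t) - Φ z) + 1/2 * ⟪v t, v t⟫ ≤ r :=
    ⟨E t₀, fun t ht => hEbound t ht⟩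
  clear hEbound hEanti hEd hE_def
  clear_value v
  clear E
  have hC0 : 0 ≤ Real.sqrt (2 * E0) := Real.sqrt_nonneg _
  have hvbound : ∀ t, t₀ ≤ t → ‖v t‖ ≤ Real.sqrt (2 * E0) := by
    intro t ht
    have hEt := hkey t ht
    have h2 : ⟪v t, v t⟫ = ‖v t‖^2 := real_inner_self_eq_norm_sq (v t)
    have hnn : 0 ≤ t^2 * (Φ (x t) - Φ z) := mul_nonneg (sq_nonneg t) (hΦnn t)
    have h1 : ‖v t‖^2 ≤ 2 * E0 := by rw [h2] at hEt; linarith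
    calc ‖v t‖ = Real.sqrt (‖v t‖^2) := (Real.sqrt_sq (norm_nonneg _)).symm
    _ ≤ Real.sqrt (2 * E0) := Real.sqrt_le_sqrt h1
  have hΦdecay : ∀ t, t₀ ≤ t → Φ (x t) - Φ z ≤ E0 / t^2 := by
    intro t ht
    have htpos : 0 < t := lt_of_lt_of_le ht₀ ht
    have hEt := hkey t ht
    have hvnn : (0:ℝ) ≤ ⟪v t, v t⟫ := real_inner_self_nonneg
    rw [le_div_iff₀ (by positivity : (0:ℝ) < t^2)]
    nlinarith
  set u : ℝ → H := fun t => t^2 • (x t - z) with hu_def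
  have hud : ∀ t, HasDerivAt u (t • v t) t := fun t => by
    have hp : HasDerivAt (fun s : ℝ => s^2) (2*t) t := by
      simpa using hasDerivAt_pow 2 t
    have h : HasDerivAt (fun s : ℝ => s^2 • (x s - z))
        (t^2 • deriv x t + (2*t) • (x t - z)) t := hp.smul ((hxd t).sub_const z)
    convert h using 1
    simp only [hv_def, smul_add, smul_smul]
    module
  clear_value u
  have hubound : ∀ T, t₀ ≤ T → ‖u T - u t₀‖ ≤ (T * Real.sqrt (2 * E0)) * (T - t₀) := by
    intro T hT
    have := Convex.norm_image_sub_le_of_norm_hasDerivWithin_le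
      (C := T * Real.sqrt (2 * E0))
      (f' := fun s => s • v s) (s := Set.Icc t₀ T)
      (fun s hs => (hud s).hasDerivWithinAt)
      (fun s hs => by
        rw [norm_smul, Real.norm_eq_abs, abs_of_nonneg (le_trans ht₀.le hs.1)]
        exact mul_le_mul hs.2 (hvbound s hs.1) (norm_nonneg _)
          (le_trans ht₀.le hT))
      (convex_Icc _ _) (Set.mem_Icc.2 ⟨le_rfl, hT⟩) (Set.mem_Icc.2 ⟨hT, le_rfl⟩)
    simpa [Real.norm_eq_abs, abs_of_nonneg (sub_nonneg.2 hT)] using this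
  have hxbound : ∀ t, t₀ ≤ t → ‖x t - z‖ ≤ ‖u t₀‖ / t₀^2 + Real.sqrt (2 * E0) := by
    intro T hT
    have hTpos : 0 < T := lt_of_lt_of_le ht₀ hT
    have h1 : ‖u T‖ ≤ ‖u t₀‖ + T * Real.sqrt (2 * E0) * (T - t₀) := by
      have h0 := hubound T hT
      have h2 := norm_sub_norm_le (u T) (u t₀)
      linarith
    have h2 : ‖u T‖ = T^2 * ‖x T - z‖ := by
      simp [hu_def, norm_smul, abs_of_nonneg (sq_nonneg T)]
    rw [h2] at h1
    have h4 : ‖u t₀‖ ≤ (‖u t₀‖ / t₀^2) * T^2 := by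
      rw [div_mul_eq_mul_div, le_div_iff₀ (by positivity : (0:ℝ) < t₀^2)]
      have hsq : t₀^2 ≤ T^2 := by nlinarith
      exact mul_le_mul_of_nonneg_left hsq (norm_nonneg _)
    have h5 : T^2 * ‖x T - z‖ ≤ T^2 * (‖u t₀‖ / t₀^2 + Real.sqrt (2 * E0)) := by
      nlinarith [mul_nonneg (mul_nonneg hC0 hTpos.le) ht₀.le]
    exact le_of_mul_le_mul_left h5 (by positivity)
  -- part (i): boundedness
  have hB : ∀ t, t₀ ≤ t → ‖x t‖ ≤ ‖u t₀‖ / t₀^2 + Real.sqrt (2 * E0) + ‖z‖ := by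
    intro t ht
    have h1 := hxbound t ht
    have h2 : ‖x t‖ - ‖z‖ ≤ ‖x t - z‖ := norm_sub_norm_le (x t) z
    linarith
  -- minimizing property
  have hΦlim : Filter.Tendsto (fun t => Φ (x t)) Filter.atTop (nhds (Φ z)) := by
    have hsq : Filter.Tendsto (fun t : ℝ => E0 / t^2) Filter.atTop (nhds 0) :=
      Filter.Tendsto.div_atTop tendsto_const_nhds (tendsto_pow_atTop two_ne_zero)
    have h0 : Filter.Tendsto (fun t => Φ (x t) - Φ z) Filter.atTop (nhds 0) :=
      squeeze_zero' (Filter.eventually_atTop.2 ⟨t₀, fun t ht => hΦnn t⟩)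
        (Filter.eventually_atTop.2 ⟨t₀, fun t ht => hΦdecay t ht⟩) hsq
    have := h0.add_const (Φ z)
    simpa using this
  -- part (ii): dist → 0
  have hdist : Filter.Tendsto (fun t : ℝ => Metric.infDist (x t) S)
      Filter.atTop (nhds 0) := by
    by_contra hcon
    rw [Metric.tendsto_nhds] at hcon
    push_neg at hcon
    obtain ⟨ε, hε, hfreq⟩ := hcon
    have hfreq' : ∀ n : ℕ, ∃ t, max (n:ℝ) t₀ ≤ t ∧ ε ≤ Metric.infDist (x t) S := by
      intro n
      obtain ⟨t, ht, hnot⟩ := Filter.frequently_atTop.1 hfreq (max (n:ℝ) t₀)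
      refine ⟨t, ht, ?_⟩
      have hd : dist (Metric.infDist (x t) S) 0 = Metric.infDist (x t) S := by
        simp [Real.dist_eq, abs_of_nonneg Metric.infDist_nonneg]
      rw [hd] at hnot
      linarith [hnot]
    choose ts hts hεs using hfreq'
    have htsT : Filter.Tendsto ts Filter.atTop Filter.atTop :=
      tendsto_atTop_mono (fun n => le_trans (le_max_left _ _) (hts n))
        tendsto_natCast_atTop_atTop
    have hmem : ∀ n, x (ts n) ∈
        Metric.closedBall z (‖u t₀‖ / t₀^2 + Real.sqrt (2 * E0)) := by
      intro n
      rw [Metric.mem_closedBall, dist_eq_norm]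
      exact hxbound (ts n) (le_trans (le_max_right _ _) (hts n))
    obtain ⟨p, _, φ, hφ, hlim⟩ :=
      tendsto_subseq_of_bounded Metric.isBounded_closedBall hmem
    have hφT : Filter.Tendsto (fun n => ts (φ n)) Filter.atTop Filter.atTop :=
      htsT.comp hφ.tendsto_atTop
    have h1 : Filter.Tendsto (fun n => Φ (x (ts (φ n)))) Filter.atTop (nhds (Φ z)) :=
      hΦlim.comp hφT
    have h2 : Filter.Tendsto (fun n => Φ (x (ts (φ n)))) Filter.atTop (nhds (Φ p)) :=
      (hΦc.tendsto p).comp hlim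
    have hΦp : Φ p = Φ z := tendsto_nhds_unique h2 h1
    have hpS : p ∈ S := by rw [hS]; intro y; rw [hΦp]; exact hz y
    have h3 : Filter.Tendsto (fun n => Metric.infDist (x (ts (φ n))) S)
        Filter.atTop (nhds (Metric.infDist p S)) :=
      ((Metric.continuous_infDist_pt S).tendsto p).comp hlim
    rw [Metric.infDist_zero_of_mem hpS] at h3
    have : ε ≤ 0 := ge_of_tendsto h3 (Filter.Eventually.of_forall fun n => hεs (φ n))
    linarith
  refine ⟨⟨‖u t₀‖ / t₀^2 + Real.sqrt (2 * E0) + ‖z‖, hB⟩, hdist, ?_⟩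
  -- part (iii)
  rintro ⟨t₁, ht₁, hS1⟩
  have ht₁pos : 0 < t₁ := lt_of_lt_of_le ht₀ ht₁
  have hgrad0 : ∀ t, t₁ ≤ t → gradient Φ (x t) = 0 := by
    intro t ht
    have hmin' : IsLocalMin Φ (x t) := by
      apply Filter.Eventually.of_forall
      have := hS1 t ht
      rw [hS] at this
      exact this
    have hf0 : fderiv ℝ Φ (x t) = 0 := hmin'.fderiv_eq_zero
    have hgr := (hΦd (x t)).hasGradientAt
    rw [hasGradientAt_iff_hasFDerivAt] at hgr
    have h2 : (InnerProductSpace.toDual ℝ H) (gradient Φ (x t)) = 0 := by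
      rw [← hgr.fderiv, hf0]
    simpa using (InnerProductSpace.toDual ℝ H).map_eq_zero_iff.mp h2
  have hode2 : ∀ t, t₁ ≤ t → deriv (deriv x) t = -((3/t) • deriv x t) := by
    intro t ht
    have h := hode t (le_trans ht₁ ht)
    rw [hgrad0 t ht, add_zero] at h
    exact eq_neg_of_add_eq_zero_left h
  have hw : ∀ t ∈ Set.Ici t₁, (fun s : ℝ => s^3 • deriv x s) t
      = (fun s : ℝ => s^3 • deriv x s) t₁ := by
    apply aux_const_on_Ici
    intro t ht
    have htpos : 0 < t := lt_of_lt_of_le ht₁pos ht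
    have hp : HasDerivAt (fun s : ℝ => s^3) (3*t^2) t := by
      simpa using hasDerivAt_pow 3 t
    have h : HasDerivAt (fun s : ℝ => s^3 • deriv x s)
        (t^3 • deriv (deriv x) t + (3*t^2) • deriv x t) t := hp.smul (hgd t)
    convert h using 1
    rw [hode2 t ht, smul_neg, smul_smul]
    have h3 : t^3 * (3/t) = 3*t^2 := by field_simp
    rw [h3]
    module
  have hderiv_eq : ∀ t, t₁ ≤ t → deriv x t = (t^3)⁻¹ • (t₁^3 • deriv x t₁) := by
    intro t ht
    have h := hw t ht
    simp only at h
    have htpos : 0 < t := lt_of_lt_of_le ht₁pos ht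
    rw [← h, smul_smul, inv_mul_cancel₀ (by positivity : (t:ℝ)^3 ≠ 0), one_smul]
  have hy : ∀ t ∈ Set.Ici t₁,
      (fun s : ℝ => x s + (2*s^2)⁻¹ • (t₁^3 • deriv x t₁)) t
        = (fun s : ℝ => x s + (2*s^2)⁻¹ • (t₁^3 • deriv x t₁)) t₁ := by
    apply aux_const_on_Ici
    intro t ht
    have htpos : 0 < t := lt_of_lt_of_le ht₁pos ht
    have ha : HasDerivAt (fun s : ℝ => (2*s^2)⁻¹) (-((t^3)⁻¹)) t := by
      have h1 : HasDerivAt (fun s : ℝ => 2*s^2) (2*(2*t)) t := by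
        simpa [mul_comm] using (hasDerivAt_pow 2 t).const_mul 2
      have h2 := h1.inv (by positivity : 2*t^2 ≠ 0)
      refine h2.congr_deriv ?_
      field_simp
    have h := (hxd t).add (ha.smul_const (t₁^3 • deriv x t₁))
    refine h.congr_deriv ?_
    rw [hderiv_eq t ht]
    module
  have hxs_eq : ∀ t, t₁ ≤ t → x t
      = (x t₁ + (2*t₁^2)⁻¹ • (t₁^3 • deriv x t₁)) - (2*t^2)⁻¹ • (t₁^3 • deriv x t₁) := by
    intro t ht
    have h := hy t ht
    simp only at h
    exact eq_sub_of_add_eq h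
  have h0 : Filter.Tendsto (fun t : ℝ => (2*t^2)⁻¹) Filter.atTop (nhds 0) := by
    apply Filter.Tendsto.inv_tendsto_atTop
    exact Filter.Tendsto.const_mul_atTop (by norm_num) (tendsto_pow_atTop two_ne_zero)
  have htend : Filter.Tendsto
      (fun t : ℝ => (x t₁ + (2*t₁^2)⁻¹ • (t₁^3 • deriv x t₁))
        - (2*t^2)⁻¹ • (t₁^3 • deriv x t₁)) Filter.atTop
      (nhds (x t₁ + (2*t₁^2)⁻¹ • (t₁^3 • deriv x t₁))) := by
    have h1 := h0.smul_const (t₁^3 • deriv x t₁)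
    rw [zero_smul] at h1
    simpa using tendsto_const_nhds.sub h1
  have hxtend : Filter.Tendsto x Filter.atTop
      (nhds (x t₁ + (2*t₁^2)⁻¹ • (t₁^3 • deriv x t₁))) := by
    apply htend.congr'
    exact Filter.eventually_atTop.2 ⟨t₁, fun t ht => (hxs_eq t ht).symm⟩
  have hSclosed : IsClosed S := by
    rw [hS]
    have h : {w : H | ∀ y, Φ w ≤ Φ y} = ⋂ y, {w : H | Φ w ≤ Φ y} := by
      ext w; simp
    rw [h]
    exact isClosed_iInter fun y => isClosed_le hΦc continuous_const
  exact ⟨x t₁ + (2*t₁^2)⁻¹ • (t₁^3 • deriv x t₁),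
    hSclosed.mem_of_tendsto hxtend (Filter.eventually_atTop.2 ⟨t₁, hS1⟩), hxtend⟩
end

section
/- Suppose 0 < α ≤ 3, and let t₁, t₂ with t₀ ≤ t₁ ≤ t₂ be such that x(t₁) = x(t₂) and this common point belongs to S = argmin Φ. Then t₂^{α/3}·‖ẋ(t₂)‖ ≤ t₁^{α/3}·‖ẋ(t₁)‖. In particular, for α = 3, t₂·‖ẋ(t₂)‖ ≤ t₁·‖ẋ(t₁)‖. -/
open AffineMap in
lemma grad_conv_ineq {H : Type*} [NormedAddCommGroup H] [InnerProductSpace ℝ H] [CompleteSpace H]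
    {Φ : H → ℝ} (hΦconv : ConvexOn ℝ Set.univ Φ) (hΦC1 : ContDiff ℝ 1 Φ) (u w : H) :
    Φ u + inner ℝ (gradient Φ u) (w - u) ≤ Φ w := by
  have hdiff : DifferentiableAt ℝ Φ u := (hΦC1.differentiable one_ne_zero).differentiableAt
  have hgrad := hdiff.hasGradientAt
  have hline : HasDerivAt (fun s : ℝ => u + s • (w - u)) (w - u) 0 := by
    simpa using ((hasDerivAt_id (0:ℝ)).smul_const (w - u)).const_add u
  have hfd : HasFDerivAt Φ ((InnerProductSpace.toDual ℝ H) (gradient Φ u)) (u + (0:ℝ) • (w - u)) := by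
    simpa using hgrad.hasFDerivAt
  have hψ : HasDerivAt (fun s : ℝ => Φ (u + s • (w - u))) (inner ℝ (gradient Φ u) (w - u) : ℝ) 0 := by
    have := hfd.comp_hasDerivAt 0 hline
    exact this.congr_deriv (by simp [InnerProductSpace.toDual_apply_apply])
  have hcv : ConvexOn ℝ Set.univ (fun s : ℝ => Φ (u + s • (w - u))) := by
    have := hΦconv.comp_affineMap (lineMap u w : ℝ →ᵃ[ℝ] H)
    simp only [Set.preimage_univ] at this
    refine this.congr (fun s _ => ?_)
    simp only [Function.comp_apply, lineMap_apply_module]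
    congr 1
    module
  have := hcv.le_slope_of_hasDerivAt (Set.mem_univ (0:ℝ)) (Set.mem_univ (1:ℝ)) one_pos hψ
  simp [slope_def_field] at this
  have hi : inner ℝ (gradient Φ u) (w - u) = fderiv ℝ Φ u w - fderiv ℝ Φ u u := by simp
  linarith

/-- for `0 < α ≤ 3`, if a trajectory of `(AVD)_α` satisfies
`x(t₁) = x(t₂) ∈ argmin Φ` with `t₀ ≤ t₁ ≤ t₂`, then
`t₂^{α/3} ‖ẋ(t₂)‖ ≤ t₁^{α/3} ‖ẋ(t₁)‖`. -/
theorem stmt_10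
    {H : Type*} [NormedAddCommGroup H] [InnerProductSpace ℝ H] [CompleteSpace H]
    (Φ : H → ℝ) (hΦconv : ConvexOn ℝ Set.univ Φ) (hΦC1 : ContDiff ℝ 1 Φ)
    (S : Set H) (hS : S = {z : H | ∀ y : H, Φ z ≤ Φ y}) (hSne : S.Nonempty)
    (α t₀ : ℝ) (hα0 : 0 < α) (hα3 : α ≤ 3) (ht₀ : 0 < t₀)
    (x : ℝ → H) (hx : ContDiff ℝ 2 x)
    (hode : ∀ t : ℝ, t₀ ≤ t →
      deriv (deriv x) t + (α / t) • deriv x t + gradient Φ (x t) = 0)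
    (t₁ t₂ : ℝ) (ht₁ : t₀ ≤ t₁) (ht₁₂ : t₁ ≤ t₂)
    (heq : x t₁ = x t₂) (hmem : x t₁ ∈ S) :
    t₂ ^ (α / 3) * ‖deriv x t₂‖ ≤ t₁ ^ (α / 3) * ‖deriv x t₁‖ := by
  have ht₁0 : (0:ℝ) < t₁ := lt_of_lt_of_le ht₀ ht₁
  have ht₂0 : (0:ℝ) < t₂ := lt_of_lt_of_le ht₁0 ht₁₂
  set z : H := x t₁ with hz
  set v : ℝ → H := deriv x with hv
  set a : ℝ → H := deriv v with ha
  -- differentiability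
  have hxd : Differentiable ℝ x := hx.differentiable (by norm_num)
  have hx1 : ContDiff ℝ 1 v := by
    have h := (contDiff_succ_iff_deriv (n := 1)).mp (by exact_mod_cast hx)
    exact h.2.2
  have hvd : Differentiable ℝ v := hx1.differentiable one_ne_zero
  have hxD : ∀ t, HasDerivAt x (v t) t := fun t => (hxd t).hasDerivAt
  have hvD : ∀ t, HasDerivAt v (a t) t := fun t => (hvd t).hasDerivAt
  have hmin : ∀ y : H, Φ z ≤ Φ y := by rw [hS] at hmem; exact hmem
  set β : ℝ := 2*α/3 with hβ
  set c2 : ℝ := (α/3 + 1)/2 with hc2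
  -- scalar helper functions
  set nv : ℝ → ℝ := fun s => (inner ℝ (v s) (v s) : ℝ) with hnv
  set p : ℝ → ℝ := fun s => (inner ℝ (v s) (x s - z) : ℝ) with hp
  set G : ℝ → ℝ := fun s => (inner ℝ (x s - z) (x s - z) : ℝ) with hG
  set ig : ℝ → ℝ := fun s => (inner ℝ (gradient Φ (x s)) (x s - z) : ℝ) with hig
  set F : ℝ → ℝ := fun s =>
      s ^ β * (Φ (x s) - Φ z + nv s / 2)
      + (2*α/3) * (s ^ (β-1) * p s + c2 * (s ^ (β-2) * G s)) with hF
  -- the key derivative computation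
  have key : ∀ t, t₀ ≤ t → HasDerivAt F
      ((2*α/3) * t ^ (β-1) * (Φ (x t) - Φ z - ig t)
        + (2*α/3) * c2 * (β-2) * t ^ (β-3) * G t) t := by
    intro t ht
    have ht' : (0:ℝ) < t := lt_of_lt_of_le ht₀ ht
    have ht0 : t ≠ 0 := ne_of_gt ht'
    -- chain rule for Φ ∘ x
    have hgrad := ((hΦC1.differentiable one_ne_zero) (x t)).hasGradientAt
    have he : HasDerivAt (fun s => Φ (x s)) ((inner ℝ (gradient Φ (x t)) (v t) : ℝ)) t := by
      have := hgrad.hasFDerivAt.comp_hasDerivAt t (hxD t)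
      exact this.congr_deriv (by simp [InnerProductSpace.toDual_apply_apply])
    -- ODE consequences
    have hodeV : a t = -((α/t) • v t) - gradient Φ (x t) := by
      have h := hode t ht
      have := eq_neg_of_add_eq_zero_left (a := a t)
        (b := (α / t) • v t + gradient Φ (x t)) (by rw [← add_assoc]; exact h)
      rw [this]; abel
    have hiav : (inner ℝ (a t) (v t) : ℝ) = -(α/t) * nv t - inner ℝ (gradient Φ (x t)) (v t) := by
      rw [hodeV]; simp [inner_sub_left, inner_neg_left, real_inner_smul_left, hnv]
    have hiax : (inner ℝ (a t) (x t - z) : ℝ) = -(α/t) * p t - ig t := by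
      rw [hodeV]; simp [inner_sub_left, inner_neg_left, real_inner_smul_left, hp, hig]
    -- derivatives of the scalar pieces
    have hnvD : HasDerivAt nv (2 * (inner ℝ (a t) (v t) : ℝ)) t := by
      have := (hvD t).inner (𝕜 := ℝ) (hvD t)
      exact this.congr_deriv (by rw [real_inner_comm (v t) (a t)]; ring)
    have hxz : HasDerivAt (fun s => x s - z) (v t) t := (hxD t).sub_const z
    have hpD : HasDerivAt p ((inner ℝ (a t) (x t - z) : ℝ) + nv t) t := by
      have := (hvD t).inner (𝕜 := ℝ) hxz
      exact this.congr_deriv (by simp only [hnv]; ring)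
    have hGD : HasDerivAt G (2 * p t) t := by
      have := hxz.inner (𝕜 := ℝ) hxz
      exact this.congr_deriv (by simp only [hp]; rw [real_inner_comm (x t - z) (v t)]; ring)
    -- rpow derivatives
    have hr0 : HasDerivAt (fun s : ℝ => s ^ β) (β * t ^ (β-1)) t :=
      Real.hasDerivAt_rpow_const (Or.inl ht0)
    have hr1 : HasDerivAt (fun s : ℝ => s ^ (β-1)) ((β-1) * t ^ (β-2)) t := by
      have := Real.hasDerivAt_rpow_const (p := β-1) (x := t) (Or.inl ht0)
      convert this using 2
      ring
    have hr2 : HasDerivAt (fun s : ℝ => s ^ (β-2)) ((β-2) * t ^ (β-3)) t := by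
      have := Real.hasDerivAt_rpow_const (p := β-2) (x := t) (Or.inl ht0)
      convert this using 2
      ring
    -- assemble
    have hE : HasDerivAt (fun s => Φ (x s) - Φ z + nv s / 2)
        ((inner ℝ (gradient Φ (x t)) (v t) : ℝ) + (2 * (inner ℝ (a t) (v t) : ℝ))/2) t :=
      (he.sub_const (Φ z)).add (hnvD.div_const 2)
    have hraw : HasDerivAt F
        ((β * t ^ (β-1) * (Φ (x t) - Φ z + nv t / 2)
          + t ^ β * ((inner ℝ (gradient Φ (x t)) (v t) : ℝ) + (2 * (inner ℝ (a t) (v t) : ℝ))/2))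
        + (2*α/3) * (((β-1) * t ^ (β-2) * p t + t ^ (β-1) * ((inner ℝ (a t) (x t - z) : ℝ) + nv t))
          + c2 * ((β-2) * t ^ (β-3) * G t + t ^ (β-2) * (2 * p t)))) t := by
      exact ((hr0.mul hE).add
        (((hr1.mul hpD).add ((hr2.mul hGD).const_mul c2)).const_mul (2*α/3)))
    convert hraw using 1
    rw [hiav, hiax]
    have q1 : t ^ β = t ^ (β-1) * t := by
      rw [← Real.rpow_add_one ht0]; congr 1; ring
    have q2 : t ^ (β-1) = t ^ (β-2) * t := by
      rw [← Real.rpow_add_one ht0]; congr 1; ring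
    have q3 : t ^ (β-2) = t ^ (β-3) * t := by
      rw [← Real.rpow_add_one ht0]; congr 1; ring
    rw [q1, q2, q3]
    field_simp
    ring
  -- F is antitone on [t₁, t₂]
  have hanti : AntitoneOn F (Set.Icc t₁ t₂) := by
    apply antitoneOn_of_deriv_nonpos (convex_Icc t₁ t₂)
    · intro t htI
      exact (key t (le_trans ht₁ htI.1)).continuousAt.continuousWithinAt
    · intro t htI
      rw [interior_Icc] at htI
      exact ((key t (le_trans ht₁ (le_of_lt htI.1))).differentiableAt).differentiableWithinAt
    · intro t htI
      rw [interior_Icc] at htI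
      have ht : t₀ ≤ t := le_trans ht₁ (le_of_lt htI.1)
      have ht' : (0:ℝ) < t := lt_of_lt_of_le ht₀ ht
      rw [(key t ht).deriv]
      have h1 : Φ (x t) - Φ z - ig t ≤ 0 := by
        have := grad_conv_ineq hΦconv hΦC1 (x t) z
        have h2 : (inner ℝ (gradient Φ (x t)) (z - x t) : ℝ) = - ig t := by
          rw [hig]; rw [show z - x t = -(x t - z) by abel, inner_neg_right]
        rw [h2] at this
        linarith
      have hG0 : 0 ≤ G t := real_inner_self_nonneg
      have hβ2 : β - 2 ≤ 0 := by rw [hβ]; linarith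
      have hpow1 : (0:ℝ) < t ^ (β-1) := Real.rpow_pos_of_pos ht' _
      have hpow3 : (0:ℝ) < t ^ (β-3) := Real.rpow_pos_of_pos ht' _
      have hc2pos : (0:ℝ) < c2 := by rw [hc2]; linarith
      have hA : (2*α/3) * t ^ (β-1) * (Φ (x t) - Φ z - ig t) ≤ 0 := by
        apply mul_nonpos_of_nonneg_of_nonpos
        · positivity
        · exact h1
      have hB : (2*α/3) * c2 * (β-2) * t ^ (β-3) * G t ≤ 0 := by
        apply mul_nonpos_of_nonpos_of_nonneg _ hG0
        apply mul_nonpos_of_nonpos_of_nonneg _ (le_of_lt hpow3)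
        have : (0:ℝ) ≤ (2*α/3) * c2 := by positivity
        nlinarith
      linarith
  have hF21 : F t₂ ≤ F t₁ :=
    hanti (Set.left_mem_Icc.mpr ht₁₂) (Set.right_mem_Icc.mpr ht₁₂) ht₁₂
  -- evaluate F at endpoints
  have hx2 : x t₂ = z := heq.symm
  have hGz : ∀ t, x t = z → G t = 0 ∧ p t = 0 := by
    intro t h
    constructor <;> simp [hG, hp, h]
  have hF1 : F t₁ = t₁ ^ β * (nv t₁ / 2) := by
    obtain ⟨hG1, hp1⟩ := hGz t₁ rfl
    rw [hF]; simp only []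
    rw [hG1, hp1]; simp [hz]
  have hF2 : F t₂ = t₂ ^ β * (nv t₂ / 2) := by
    obtain ⟨hG1, hp1⟩ := hGz t₂ hx2
    rw [hF]; simp only []
    rw [hG1, hp1, hx2]; simp
  rw [hF1, hF2] at hF21
  -- conclude
  have hnv1 : nv t₁ = ‖v t₁‖^2 := real_inner_self_eq_norm_sq (v t₁)
  have hnv2 : nv t₂ = ‖v t₂‖^2 := real_inner_self_eq_norm_sq (v t₂)
  rw [hnv1, hnv2] at hF21
  have hsq : (t₂ ^ (α/3) * ‖v t₂‖)^2 ≤ (t₁ ^ (α/3) * ‖v t₁‖)^2 := by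
    have e1 : ∀ t : ℝ, 0 < t → (t ^ (α/3) * ‖v t‖)^2 = t ^ β * ‖v t‖^2 := by
      intro t ht'
      rw [mul_pow, ← Real.rpow_natCast (t ^ (α/3)) 2, ← Real.rpow_mul (le_of_lt ht')]
      congr 2
      rw [hβ]; push_cast; ring
    rw [e1 t₁ ht₁0, e1 t₂ ht₂0]
    linarith
  have h1 : (0:ℝ) ≤ t₂ ^ (α/3) * ‖v t₂‖ := by positivity
  have h2 : (0:ℝ) ≤ t₁ ^ (α/3) * ‖v t₁‖ := by positivity
  exact (pow_le_pow_iff_left₀ h1 h2 (two_ne_zero)).mp hsq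
end

section
/- Suppose H = ℝ and α = 3. Then x(t) converges, as t → +∞, to a point of S = argmin Φ; that is, there exists x* ∈ S such that x(t) → x* as t → +∞. -/
open Filter Set

private lemma grad_ineq_s11 {Φ : ℝ → ℝ} (hΦconv : ConvexOn ℝ Set.univ Φ)
    (hd : Differentiable ℝ Φ) (a b : ℝ) :
    Φ a + deriv Φ a * (b - a) ≤ Φ b := by
  rcases lt_trichotomy a b with h | rfl | h
  · have h1 := hΦconv.deriv_le_slope (mem_univ a) (mem_univ b) h (hd a)
    rw [slope_def_field] at h1
    have hba : (0:ℝ) < b - a := by linarith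
    have := (le_div_iff₀ hba).mp h1
    linarith
  · simp
  · have h1 := hΦconv.slope_le_deriv (mem_univ b) (mem_univ a) h (hd a)
    rw [slope_def_field] at h1
    have hab : (0:ℝ) < a - b := by linarith
    rw [div_le_iff₀ hab] at h1
    nlinarith

private lemma exists_tendsto_of_antitoneOn {f : ℝ → ℝ} {t₀ : ℝ}
    (hf : AntitoneOn f (Set.Ici t₀)) (h0 : ∀ t, t₀ ≤ t → 0 ≤ f t) :
    ∃ L, Filter.Tendsto f Filter.atTop (nhds L) := by
  set g : ℝ → ℝ := fun t => f (max t t₀) with hg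
  have hganti : Antitone g := fun s t hst =>
    hf (Set.mem_Ici.mpr (le_max_right _ _)) (Set.mem_Ici.mpr (le_max_right _ _)) (max_le_max hst le_rfl)
  have hbdd : BddBelow (Set.range g) := by
    refine ⟨0, ?_⟩
    rintro _ ⟨t, rfl⟩
    exact h0 _ (le_max_right _ _)
  refine ⟨_, (tendsto_atTop_ciInf hganti hbdd).congr' ?_⟩
  filter_upwards [eventually_ge_atTop t₀] with t ht
  simp [hg, max_eq_left ht]

private lemma cesaro {F g : ℝ → ℝ} {L t₀ : ℝ} (ht₀ : 0 < t₀)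
    (hF : ∀ t, t₀ ≤ t → HasDerivAt F (t * g t) t)
    (hg : Filter.Tendsto g Filter.atTop (nhds L)) :
    Filter.Tendsto (fun t => F t / t ^ 2) Filter.atTop (nhds (L / 2)) := by
  rw [Metric.tendsto_nhds]
  intro ε hε
  have hε4 : (0:ℝ) < ε / 4 := by linarith
  obtain ⟨T', hT'⟩ := (Metric.tendsto_atTop.mp hg) (ε / 4) hε4
  set T : ℝ := max T' t₀ with hT
  have hTt₀ : t₀ ≤ T := le_max_right _ _
  have hTpos : 0 < T := lt_of_lt_of_le ht₀ hTt₀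
  set G : ℝ → ℝ := fun t => F t - L / 2 * t ^ 2 with hGdef
  have hG : ∀ t, t₀ ≤ t → HasDerivAt G (t * (g t - L)) t := by
    intro t ht
    have h1 : HasDerivAt (fun t : ℝ => L / 2 * t ^ 2) (L / 2 * (2 * t)) t := by
      simpa using (HasDerivAt.const_mul (L / 2) (hasDerivAt_pow 2 t))
    have := (hF t ht).sub h1
    exact this.congr_deriv (by ring)
  have key : ∀ s, T ≤ s → |G s - G T| ≤ ε / 4 * s ^ 2 := by
    intro s hs
    have hconv : Convex ℝ (Set.Icc T s) := convex_Icc _ _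
    have hder : ∀ u ∈ Set.Icc T s, HasDerivWithinAt G (u * (g u - L)) (Set.Icc T s) u :=
      fun u hu => (hG u (le_trans hTt₀ hu.1)).hasDerivWithinAt
    have hbound : ∀ u ∈ Set.Icc T s, ‖u * (g u - L)‖ ≤ s * (ε / 4) := by
      intro u hu
      have hu0 : 0 ≤ u := le_of_lt (lt_of_lt_of_le hTpos hu.1)
      have hgu : |g u - L| ≤ ε / 4 := by
        have := hT' u (le_trans (le_max_left _ _) hu.1)
        rw [Real.dist_eq] at this
        linarith
      have heq : ‖u * (g u - L)‖ = u * |g u - L| := by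
        rw [norm_mul, Real.norm_eq_abs, Real.norm_eq_abs, abs_of_nonneg hu0]
      rw [heq]
      have h1 : u * |g u - L| ≤ u * (ε / 4) := mul_le_mul_of_nonneg_left hgu hu0
      have h2 : u * (ε / 4) ≤ s * (ε / 4) := mul_le_mul_of_nonneg_right hu.2 (le_of_lt hε4)
      linarith
    have hMVT := hconv.norm_image_sub_le_of_norm_hasDerivWithin_le hder hbound
        (Set.left_mem_Icc.mpr hs) (Set.right_mem_Icc.mpr hs)
    rw [Real.norm_eq_abs, Real.norm_eq_abs, abs_of_nonneg (by linarith : (0:ℝ) ≤ s - T)] at hMVT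
    have hspos : 0 < s := lt_of_lt_of_le hTpos hs
    nlinarith [mul_nonneg (mul_nonneg hε4.le hspos.le) hTpos.le]
  filter_upwards [eventually_ge_atTop T, eventually_ge_atTop (1:ℝ),
    eventually_ge_atTop (|G T| / (ε / 4))] with s hsT hs1 hsG
  have hspos : (0:ℝ) < s := lt_of_lt_of_le one_pos hs1
  have hs2 : (0:ℝ) < s ^ 2 := by positivity
  have hGs : |G s| ≤ |G T| + ε / 4 * s ^ 2 := by
    have h1 := key s hsT
    have htri : |G s| ≤ |G T| + |G s - G T| := by
      have := abs_add_le (G T) (G s - G T)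
      simpa using this
    linarith
  have hGT2 : |G T| ≤ ε / 4 * s ^ 2 := by
    rw [div_le_iff₀ hε4] at hsG
    nlinarith [mul_nonneg (mul_nonneg hspos.le (by linarith : (0:ℝ) ≤ s - 1)) hε4.le]
  have hcalc : F s / s ^ 2 - L / 2 = G s / s ^ 2 := by
    rw [hGdef]
    field_simp
  rw [Real.dist_eq, hcalc, abs_div, abs_of_pos hs2, div_lt_iff₀ hs2]
  calc |G s| ≤ |G T| + ε / 4 * s ^ 2 := hGs
    _ ≤ ε / 4 * s ^ 2 + ε / 4 * s ^ 2 := by linarith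
    _ < ε * s ^ 2 := by nlinarith

/-- in dimension one, for `α = 3`, any trajectory of `(AVD)_3`
converges, as `t → ∞`, to a minimizer of `Φ`. -/
theorem stmt_11
    (Φ : ℝ → ℝ) (hΦconv : ConvexOn ℝ Set.univ Φ) (hΦC1 : ContDiff ℝ 1 Φ)
    (hSne : {z : ℝ | ∀ y : ℝ, Φ z ≤ Φ y}.Nonempty)
    (t₀ : ℝ) (ht₀ : 0 < t₀)
    (x : ℝ → ℝ) (hx : ContDiff ℝ 2 x)
    (hode : ∀ t : ℝ, t₀ ≤ t →
      deriv (deriv x) t + ((3 : ℝ) / t) * deriv x t + deriv Φ (x t) = 0) :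
    ∃ xs : ℝ, (∀ y : ℝ, Φ xs ≤ Φ y) ∧
      Filter.Tendsto x Filter.atTop (nhds xs) := by
  obtain ⟨z, hz⟩ := hSne
  simp only [Set.mem_setOf_eq] at hz
  set m : ℝ := Φ z with hm
  have hΦd : Differentiable ℝ Φ := hΦC1.differentiable one_ne_zero
  have hxd : Differentiable ℝ x := hx.differentiable two_ne_zero
  have hx'C1 : ContDiff ℝ 1 (deriv x) := by
    have h2 : ContDiff ℝ ((1 : ℕ) + 1) x := by exact_mod_cast hx
    exact (contDiff_succ_iff_deriv.mp h2).2.2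
  have hx'd : Differentiable ℝ (deriv x) := hx'C1.differentiable one_ne_zero
  set W : ℝ → ℝ → ℝ := fun c t =>
    t ^ 2 * (Φ (x t) - m) + (1 / 2) * (2 * (x t - c) + t * deriv x t) ^ 2 with hWdef
  have hWdiff : ∀ c : ℝ, Differentiable ℝ (W c) := by
    intro c
    apply Differentiable.add
    · exact (differentiable_id.pow 2).mul ((hΦd.comp hxd).sub_const m)
    · exact ((((hxd.sub_const c).const_mul 2).add (differentiable_id.mul hx'd)).pow 2).const_mul _
  have hWderiv : ∀ c : ℝ, ∀ t : ℝ, t₀ ≤ t →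
      HasDerivAt (W c) (2 * t * ((Φ (x t) - m) - (x t - c) * deriv Φ (x t))) t := by
    intro c t ht
    have htpos : (0:ℝ) < t := lt_of_lt_of_le ht₀ ht
    have h1 : HasDerivAt (fun t : ℝ => t ^ 2) (2 * t) t := by
      simpa using hasDerivAt_pow 2 t
    have h2 : HasDerivAt (fun t => Φ (x t)) (deriv Φ (x t) * deriv x t) t :=
      (hΦd (x t)).hasDerivAt.comp t (hxd t).hasDerivAt
    have h3 : HasDerivAt (fun t => t ^ 2 * (Φ (x t) - m))
        (2 * t * (Φ (x t) - m) + t ^ 2 * (deriv Φ (x t) * deriv x t)) t :=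
      h1.mul (h2.sub_const m)
    have h4 : HasDerivAt (fun t => 2 * (x t - c) + t * deriv x t)
        (2 * deriv x t + (deriv x t + t * deriv (deriv x) t)) t := by
      have ha : HasDerivAt (fun t => 2 * (x t - c)) (2 * deriv x t) t :=
        ((hxd t).hasDerivAt.sub_const c).const_mul 2
      have hb : HasDerivAt (fun t => t * deriv x t)
          (1 * deriv x t + t * deriv (deriv x) t) t :=
        (hasDerivAt_id t).mul (hx'd t).hasDerivAt
      have := ha.add hb
      exact this.congr_deriv (by ring)
    have h5 : HasDerivAt (fun t => (1/2 : ℝ) * (2 * (x t - c) + t * deriv x t) ^ 2)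
        ((1/2 : ℝ) * (((2:ℕ) : ℝ) * (2 * (x t - c) + t * deriv x t) ^ 1 *
          (2 * deriv x t + (deriv x t + t * deriv (deriv x) t)))) t :=
      (h4.pow 2).const_mul (1/2 : ℝ)
    have hsum := h3.add h5
    have hode' : deriv (deriv x) t = -(3 / t) * deriv x t - deriv Φ (x t) := by
      have := hode t ht
      linarith
    refine hsum.congr_deriv ?_
    rw [hode']
    field_simp
    ring
  have hWanti : ∀ c : ℝ, (∀ y : ℝ, Φ c ≤ Φ y) → AntitoneOn (W c) (Set.Ici t₀) := by
    intro c hc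
    apply antitoneOn_of_deriv_nonpos (convex_Ici t₀)
      (hWdiff c).continuous.continuousOn ((hWdiff c).differentiableOn)
    intro t ht
    rw [interior_Ici] at ht
    have ht' : t₀ ≤ t := le_of_lt ht
    have htpos : (0:ℝ) < t := lt_of_lt_of_le ht₀ ht'
    rw [(hWderiv c t ht').deriv]
    have hgi := grad_ineq_s11 hΦconv hΦd (x t) c
    have hcm : Φ c = m := le_antisymm (hc z) (hz c)
    nlinarith
  have hWnonneg : ∀ c : ℝ, (∀ y : ℝ, Φ c ≤ Φ y) → ∀ t : ℝ, t₀ ≤ t → 0 ≤ W c t := by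
    intro c hc t _
    have h1 : 0 ≤ Φ (x t) - m := by
      have h := hz (x t)
      linarith
    have h2 : (0:ℝ) ≤ t ^ 2 * (Φ (x t) - m) := mul_nonneg (sq_nonneg t) h1
    simp only [hWdef]
    nlinarith [sq_nonneg (2 * (x t - c) + t * deriv x t)]
  -- Φ (x t) → m
  have hΦxm : Filter.Tendsto (fun t => Φ (x t)) Filter.atTop (nhds m) := by
    have hub : ∀ᶠ t in Filter.atTop, Φ (x t) ≤ m + W z t₀ / t ^ 2 := by
      filter_upwards [eventually_ge_atTop t₀, eventually_gt_atTop (0:ℝ)] with t ht htpos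
      have hWt : W z t ≤ W z t₀ := hWanti z hz (Set.self_mem_Ici) ht ht
      have hsq : (0:ℝ) ≤ (1 / 2) * (2 * (x t - z) + t * deriv x t) ^ 2 := by positivity
      have h1 : t ^ 2 * (Φ (x t) - m) ≤ W z t₀ := by
        refine le_trans ?_ hWt
        simp only [hWdef]
        linarith
      have ht2 : (0:ℝ) < t ^ 2 := by positivity
      rw [← sub_le_iff_le_add']
      calc Φ (x t) - m = t ^ 2 * (Φ (x t) - m) / t ^ 2 := by field_simp
        _ ≤ W z t₀ / t ^ 2 := by gcongr
    have hlb : ∀ᶠ t in Filter.atTop, m ≤ Φ (x t) := by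
      filter_upwards with t
      exact hz (x t)
    have hlim : Filter.Tendsto (fun t : ℝ => m + W z t₀ / t ^ 2) Filter.atTop (nhds (m + 0)) := by
      apply Filter.Tendsto.const_add
      apply Filter.Tendsto.div_atTop tendsto_const_nhds
      exact tendsto_pow_atTop (by norm_num) |>.comp tendsto_id
    rw [add_zero] at hlim
    exact tendsto_of_tendsto_of_tendsto_of_le_of_le' tendsto_const_nhds hlim hlb hub
  by_cases hsingle : ∀ w : ℝ, (∀ y : ℝ, Φ w ≤ Φ y) → w = z
  · -- unique minimizer
    refine ⟨z, hz, ?_⟩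
    rw [Metric.tendsto_nhds]
    intro ε hε
    have hne : ∀ p : ℝ, p ≠ z → m < Φ p := by
      intro p hp
      rcases lt_or_ge m (Φ p) with h | h
      · exact h
      · exfalso
        apply hp
        apply hsingle
        intro y
        exact le_trans h (hz y)
    have hδp : 0 < Φ (z + ε) - m := by
      have := hne (z + ε) (by intro h; nlinarith [hε])
      linarith
    have hδm : 0 < Φ (z - ε) - m := by
      have := hne (z - ε) (by intro h; nlinarith [hε])
      linarith
    set δ : ℝ := min (Φ (z + ε) - m) (Φ (z - ε) - m) with hδdef
    have hδ : 0 < δ := lt_min hδp hδm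
    have hev : ∀ᶠ t in Filter.atTop, Φ (x t) < m + δ :=
      hΦxm.eventually_lt_const (by linarith)
    filter_upwards [hev] with t ht
    rw [Real.dist_eq, abs_lt]
    constructor
    · -- z - ε < x t
      by_contra hcon
      push_neg at hcon
      -- x t ≤ z - ε, so x t - z ≤ -ε
      have hle : x t - z ≤ -ε := by linarith
      have hxtz : x t ≠ z := by intro h; rw [h] at hle; linarith
      have hzx : z - x t > 0 := by linarith
      set lam : ℝ := ε / (z - x t) with hlam
      have hlam0 : 0 ≤ lam := le_of_lt (div_pos hε hzx)
      have hlam1 : lam ≤ 1 := by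
        rw [hlam, div_le_one hzx]
        linarith
      have hcomb := hΦconv.2 (mem_univ z) (mem_univ (x t))
        (by linarith : (0:ℝ) ≤ 1 - lam) hlam0 (by ring)
      have hpt : (1 - lam) • z + lam • (x t) = z - ε := by
        simp only [smul_eq_mul]
        rw [hlam]
        field_simp [hzx.ne']
        ring
      rw [hpt] at hcomb
      have : Φ (z - ε) ≤ Φ (x t) := by
        have h1 := hz (x t)
        simp only [smul_eq_mul] at hcomb
        nlinarith
      have h2 : m + δ ≤ Φ (z - ε) := by
        have := min_le_right (Φ (z + ε) - m) (Φ (z - ε) - m)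
        rw [← hδdef] at this
        linarith
      linarith
    · -- x t < z + ε
      by_contra hcon
      push_neg at hcon
      have hle : ε ≤ x t - z := by linarith
      have hzx : x t - z > 0 := by linarith
      set lam : ℝ := ε / (x t - z) with hlam
      have hlam0 : 0 ≤ lam := le_of_lt (div_pos hε hzx)
      have hlam1 : lam ≤ 1 := by
        rw [hlam, div_le_one hzx]
        linarith
      have hcomb := hΦconv.2 (mem_univ z) (mem_univ (x t))
        (by linarith : (0:ℝ) ≤ 1 - lam) hlam0 (by ring)
      have hpt : (1 - lam) • z + lam • (x t) = z + ε := by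
        simp only [smul_eq_mul]
        rw [hlam]
        field_simp [hzx.ne']
        ring
      rw [hpt] at hcomb
      have : Φ (z + ε) ≤ Φ (x t) := by
        have h1 := hz (x t)
        simp only [smul_eq_mul] at hcomb
        nlinarith
      have h2 : m + δ ≤ Φ (z + ε) := by
        have := min_le_left (Φ (z + ε) - m) (Φ (z - ε) - m)
        rw [← hδdef] at this
        linarith
      linarith
  · -- at least two minimizers
    push_neg at hsingle
    obtain ⟨w, hw, hwz⟩ := hsingle
    obtain ⟨Lz, hLz⟩ := exists_tendsto_of_antitoneOn (hWanti z hz) (hWnonneg z hz)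
    obtain ⟨Lw, hLw⟩ := exists_tendsto_of_antitoneOn (hWanti w hw) (hWnonneg w hw)
    set g : ℝ → ℝ := fun t => 2 * x t + t * deriv x t with hgdef
    have hgeq : ∀ t : ℝ, g t = (W z t - W w t) / (2 * (w - z)) + (z + w) := by
      intro t
      rw [hWdef, hgdef]
      have hwz' : w - z ≠ 0 := sub_ne_zero.mpr hwz
      field_simp
      ring
    have hgtend : Filter.Tendsto g Filter.atTop
        (nhds ((Lz - Lw) / (2 * (w - z)) + (z + w))) := by
      rw [show g = fun t => (W z t - W w t) / (2 * (w - z)) + (z + w) from funext hgeq]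
      exact (((hLz.sub hLw).div_const _).add_const _)
    set L : ℝ := (Lz - Lw) / (2 * (w - z)) + (z + w) with hLdef
    have hF : ∀ t : ℝ, t₀ ≤ t → HasDerivAt (fun t => t ^ 2 * x t) (t * g t) t := by
      intro t _
      have h1 : HasDerivAt (fun t : ℝ => t ^ 2) (2 * t) t := by
        simpa using hasDerivAt_pow 2 t
      have := h1.mul (hxd t).hasDerivAt
      refine this.congr_deriv ?_
      rw [hgdef]
      ring
    have hxlim : Filter.Tendsto x Filter.atTop (nhds (L / 2)) := by
      have hces := cesaro ht₀ hF hgtend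
      have : ∀ᶠ t in Filter.atTop, t ^ 2 * x t / t ^ 2 = x t := by
        filter_upwards [eventually_gt_atTop (0:ℝ)] with t htpos
        field_simp
      exact hces.congr' this
    refine ⟨L / 2, ?_, hxlim⟩
    have hΦcont : Continuous Φ := hΦd.continuous
    have hΦLlim : Filter.Tendsto (fun t => Φ (x t)) Filter.atTop (nhds (Φ (L / 2))) :=
      (hΦcont.tendsto (L / 2)).comp hxlim
    have hΦval : Φ (L / 2) = m := tendsto_nhds_unique hΦLlim hΦxm
    intro y
    rw [hΦval]
    exact hz y
end

section
/- Suppose Φ admits a strong minimum at x*, i.e. there exists μ > 0 such that Φ(y) ≥ Φ(x*) + (μ/2)‖y − x*‖² for every y ∈ H (so argmin Φ = {x*}). Then for any α > 0, x(t) converges strongly to x* as t → +∞, and moreover: (i) Φ(x(t)) − inf Φ = O(t^{−2α/3}); (ii) ‖x(t) − x*‖² = O(t^{−2α/3}); (iii) ‖ẋ(t)‖ = O(t^{−α/3}), as t → +∞. -/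
open scoped RealInnerProductSpace

/-- Gradient inequality for differentiable convex functions on a real Hilbert space. -/
lemma grad_ineq_aux {H : Type*} [NormedAddCommGroup H] [InnerProductSpace ℝ H] [CompleteSpace H]
    {Φ : H → ℝ} (hconv : ConvexOn ℝ Set.univ Φ) (hd : Differentiable ℝ Φ)
    (y z : H) : Φ y + ⟪gradient Φ y, z - y⟫ ≤ Φ z := by
  set g : ℝ → ℝ := fun s => Φ (y + s • (z - y)) with hg
  have hgconv : ConvexOn ℝ Set.univ g := by
    have := hconv.comp_affineMap (AffineMap.lineMap y z : ℝ →ᵃ[ℝ] H)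
    simp only [Set.preimage_univ] at this
    convert this using 1
    rotate_right
    funext s
    simp [g, AffineMap.lineMap_apply, hg]
    congr 1
    module
    all_goals rfl
  have hpath : HasDerivAt (fun s : ℝ => y + s • (z - y)) (z - y) 0 := by
    simpa using ((hasDerivAt_id (0:ℝ)).smul_const (z - y)).const_add y
  have hg0 : HasDerivAt g ⟪gradient Φ y, z - y⟫ 0 := by
    have hgrad := (hd (y + (0:ℝ) • (z - y))).hasGradientAt
    have := hgrad.hasFDerivAt.comp_hasDerivAt 0 hpath
    show HasDerivAt (Φ ∘ fun s => y + s • (z - y)) _ 0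
    simpa [InnerProductSpace.toDual_apply_apply] using this
  have hslope := hgconv.le_slope_of_hasDerivAt (Set.mem_univ 0) (Set.mem_univ 1)
      zero_lt_one hg0
  rw [slope_def_field] at hslope
  simp only [g, one_smul, zero_smul, add_zero] at hslope ⊢
  have : y + (z - y) = z := by abel
  rw [this] at hslope
  have h10 : (1:ℝ) - 0 = 1 := by norm_num
  rw [h10] at hslope
  simp at hslope
  have hi : ⟪gradient Φ y, z - y⟫ = fderiv ℝ Φ y z - fderiv ℝ Φ y y := by
    simp [InnerProductSpace.toDual_apply_apply]
  linarith [hslope, hi]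

set_option maxHeartbeats 1600000 in
/-- if `Φ` has a strong minimum `x*` (with modulus `μ > 0`), then
for any `α > 0` the trajectory of `(AVD)_α` converges strongly to `x*`, with
`Φ(x(t)) - min Φ = O(t^{-2α/3})`, `‖x(t) - x*‖² = O(t^{-2α/3})` and
`‖ẋ(t)‖ = O(t^{-α/3})`. -/
theorem stmt_12
    {H : Type*} [NormedAddCommGroup H] [InnerProductSpace ℝ H] [CompleteSpace H]
    (Φ : H → ℝ) (hΦconv : ConvexOn ℝ Set.univ Φ) (hΦC1 : ContDiff ℝ 1 Φ)
    (xstar : H) (μ : ℝ) (hμ : 0 < μ)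
    (hstrong : ∀ y : H, Φ xstar + μ / 2 * ‖y - xstar‖ ^ 2 ≤ Φ y)
    (α t₀ : ℝ) (hα : 0 < α) (ht₀ : 0 < t₀)
    (x : ℝ → H) (hx : ContDiff ℝ 2 x)
    (hode : ∀ t : ℝ, t₀ ≤ t →
      deriv (deriv x) t + (α / t) • deriv x t + gradient Φ (x t) = 0) :
    Filter.Tendsto x Filter.atTop (nhds xstar) ∧
    (∃ M : ℝ, 0 ≤ M ∧ ∀ t : ℝ, t₀ ≤ t →
      Φ (x t) - Φ xstar ≤ M / t ^ (2 * α / 3)) ∧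
    (∃ M : ℝ, 0 ≤ M ∧ ∀ t : ℝ, t₀ ≤ t →
      ‖x t - xstar‖ ^ 2 ≤ M / t ^ (2 * α / 3)) ∧
    (∃ M : ℝ, 0 ≤ M ∧ ∀ t : ℝ, t₀ ≤ t →
      ‖deriv x t‖ ≤ M / t ^ (α / 3)) := by
  have hΦd : Differentiable ℝ Φ := hΦC1.differentiable one_ne_zero
  have hx2 := (contDiff_succ_iff_deriv (n := 1)).mp (by exact_mod_cast hx)
  have hx1 : Differentiable ℝ x := hx2.1
  have hdx : Differentiable ℝ (deriv x) := hx2.2.2.differentiable one_ne_zero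
  obtain ⟨u, hu⟩ : ∃ u : ℝ → H, u = deriv x := ⟨_, rfl⟩
  obtain ⟨w, hw⟩ : ∃ w : ℝ → H, w = deriv (deriv x) := ⟨_, rfl⟩
  obtain ⟨v, hv⟩ : ∃ v : ℝ → H, v = fun s => x s - xstar := ⟨_, rfl⟩
  obtain ⟨G, hG⟩ : ∃ G : ℝ → H, G = fun s => gradient Φ (x s) := ⟨_, rfl⟩
  obtain ⟨A, hA⟩ : ∃ A : ℝ → ℝ, A = fun s => Φ (x s) - Φ xstar := ⟨_, rfl⟩
  have hX' : ∀ t, HasDerivAt x (u t) t := fun t => by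
    rw [hu]; exact (hx1 t).hasDerivAt
  have hU : ∀ t, HasDerivAt u (w t) t := fun t => by
    rw [hu, hw]; exact (hdx t).hasDerivAt
  have hV : ∀ t, HasDerivAt v (u t) t := fun t => by
    rw [hv]; exact (hX' t).sub_const xstar
  have hPhi' : ∀ t, HasDerivAt (fun s => Φ (x s)) ⟪G t, u t⟫ t := fun t => by
    rw [hG]
    have hgrad := (hΦd (x t)).hasGradientAt
    have := hgrad.hasFDerivAt.comp_hasDerivAt t (hX' t)
    show HasDerivAt (Φ ∘ x) _ t
    simpa [InnerProductSpace.toDual_apply_apply] using this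
  have hode' : ∀ t, t₀ ≤ t → w t = -((α / t) • u t) - G t := by
    intro t ht
    rw [hu, hw, hG]
    simp only []
    have h := hode t ht
    rw [← sub_zero (deriv (deriv x) t), ← h]
    abel
  obtain ⟨p, hp⟩ : ∃ p : ℝ, p = 2 * α / 3 := ⟨_, rfl⟩
  obtain ⟨c, hc⟩ : ∃ c : ℝ, c = p * (p + 2) / 4 := ⟨_, rfl⟩
  have hp0 : 0 < p := by rw [hp]; linarith
  have hc0 : 0 < c := by rw [hc]; nlinarith
  obtain ⟨E, hE⟩ : ∃ E : ℝ → ℝ, E = fun s => s ^ p * A s + (1/2) * (s ^ p * ⟪u s, u s⟫)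
      + p * (s ^ (p-1) * ⟪v s, u s⟫) + c * (s ^ (p-2) * ⟪v s, v s⟫) := ⟨_, rfl⟩
  obtain ⟨D, hD⟩ : ∃ D : ℝ → ℝ, D = fun s => p * s ^ (p-1) * (A s - ⟪G s, v s⟫)
      + (c * (p-2)) * (s ^ (p-3) * ⟪v s, v s⟫) := ⟨_, rfl⟩
  -- derivative of the energy
  have hEderiv : ∀ t, t₀ ≤ t → HasDerivAt E (D t) t := by
    intro t ht
    have htp : (0:ℝ) < t := lt_of_lt_of_le ht₀ ht
    have hP : ∀ q : ℝ, HasDerivAt (fun s : ℝ => s ^ q) (q * t ^ (q-1)) t :=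
      fun q => Real.hasDerivAt_rpow_const (Or.inl htp.ne')
    have hAt : HasDerivAt A ⟪G t, u t⟫ t := by
      rw [hA]; exact (hPhi' t).sub_const _
    have term1 := (hP p).mul hAt
    have term2 := ((hP p).mul ((hU t).inner ℝ (hU t))).const_mul (1/2 : ℝ)
    have term3 := ((hP (p-1)).mul ((hV t).inner ℝ (hU t))).const_mul p
    have term4 := ((hP (p-2)).mul ((hV t).inner ℝ (hV t))).const_mul c
    have hsum := ((term1.add term2).add term3).add term4
    rw [hE]
    convert hsum using 1
    rotate_right
    have e1 : t ^ (p-1-1) = t ^ (p-2) := by rw [show p-1-1 = p-2 from by ring]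
    have e2 : t ^ (p-2-1) = t ^ (p-3) := by rw [show p-2-1 = p-3 from by ring]
    have w3 : t ^ (p-2) = t ^ (p-3) * t := by
      rw [show p-2 = p-3 - (-1) from by ring, Real.rpow_sub htp, Real.rpow_neg_one]
      field_simp
    have w2 : t ^ (p-1) = t ^ (p-2) * t := by
      rw [show p-1 = p-2 - (-1) from by ring, Real.rpow_sub htp, Real.rpow_neg_one]
      field_simp
    have w1 : t ^ p = t ^ (p-1) * t := by
      rw [show p = p-1 - (-1) from by ring, Real.rpow_sub htp, Real.rpow_neg_one]
      field_simp
      rw [show p-1 - -1 - 1 = p-1 from by ring]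
    rw [hode' t ht]
    simp only [inner_sub_left, inner_sub_right, inner_neg_left, inner_neg_right,
      real_inner_smul_left, real_inner_smul_right]
    rw [hD]
    simp only []
    rw [e1, e2, w1, w2, w3, real_inner_comm (u t) (G t), real_inner_comm (u t) (v t),
      real_inner_comm (v t) (G t)]
    rw [hc, hp]
    field_simp
    ring
    all_goals rfl
  -- basic facts
  have hveq : ∀ s, x s - xstar = v s := fun s => by rw [hv]
  have hAq : ∀ s, μ/2 * ‖v s‖^2 ≤ A s := by
    intro s
    have h := hstrong (x s)
    rw [hveq] at h
    rw [hA]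
    simp only []
    linarith only [h]
  have hA0 : ∀ s, 0 ≤ A s := fun s => le_trans (by positivity) (hAq s)
  have hA2' : ∀ s, ‖v s‖^2 ≤ 2/μ * A s := by
    intro s
    rw [div_mul_eq_mul_div, le_div_iff₀ hμ]
    linarith only [hAq s]
  have hCS : ∀ s, -(‖v s‖ * ‖u s‖) ≤ ⟪v s, u s⟫ := by
    intro s
    have h := real_inner_le_norm (-(v s)) (u s)
    rw [inner_neg_left, norm_neg] at h
    linarith
  have hIvv : ∀ s, ⟪v s, v s⟫ = ‖v s‖^2 := fun s => real_inner_self_eq_norm_sq _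
  have hIuu : ∀ s, ⟪u s, u s⟫ = ‖u s‖^2 := fun s => real_inner_self_eq_norm_sq _
  have hgrad : ∀ s, A s ≤ ⟪G s, v s⟫ := by
    intro s
    have h := grad_ineq_aux hΦconv hΦd (x s) xstar
    rw [← neg_sub (x s) xstar, inner_neg_right, hveq] at h
    rw [hA, hG]
    simp only []
    linarith only [h]
  -- threshold time T
  obtain ⟨T, hT⟩ : ∃ T : ℝ, T = max t₀ (Real.sqrt (2*p^2/μ)) := ⟨_, rfl⟩
  have hTt₀ : t₀ ≤ T := by rw [hT]; exact le_max_left _ _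
  have hT0 : 0 < T := lt_of_lt_of_le ht₀ hTt₀
  have hT2 : ∀ t, T ≤ t → 2*p^2 ≤ μ*t^2 := by
    intro t ht
    have h1 : Real.sqrt (2*p^2/μ) ≤ t := le_trans (le_max_right _ _) (hT ▸ ht)
    have h2 : 2*p^2/μ ≤ t^2 := by
      rw [← Real.sq_sqrt (div_nonneg (by positivity) hμ.le)]
      exact pow_le_pow_left₀ (Real.sqrt_nonneg _) h1 2
    rw [div_le_iff₀ hμ] at h2
    linarith
  -- lower bound for E
  have hElow : ∀ t, T ≤ t → (1/2) * (t^p * A t) ≤ E t := by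
    intro t ht
    have htp : (0:ℝ) < t := lt_of_lt_of_le hT0 ht
    obtain ⟨r, hr'⟩ : ∃ r : ℝ, r = t ^ (p-2) := ⟨_, rfl⟩
    have hr : 0 < r := hr' ▸ Real.rpow_pos_of_pos htp _
    have w2 : t ^ (p-1) = r * t := by
      rw [hr', show p-1 = p-2 - (-1) from by ring, Real.rpow_sub htp, Real.rpow_neg_one]
      field_simp
    have w1 : t ^ p = r * t * t := by
      rw [show p = p-1 - (-1) from by ring, Real.rpow_sub htp, Real.rpow_neg_one, w2]
      field_simp
    have hTc := hT2 t ht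
    have ha : 0 ≤ ‖v t‖ := norm_nonneg _
    have hb : 0 ≤ ‖u t‖ := norm_nonneg _
    have K1 : 0 ≤ (1/2)*(r*t*t)*(A t - μ/2*‖v t‖^2) :=
      mul_nonneg (by nlinarith [mul_pos (mul_pos hr htp) htp] : (0:ℝ) ≤ (1/2)*(r*t*t))
        (by linarith [hAq t])
    have K2 : 0 ≤ p*(r*t)*(⟪v t, u t⟫ + ‖v t‖*‖u t‖) :=
      mul_nonneg (by nlinarith [mul_pos (mul_pos hp0 hr) htp] : (0:ℝ) ≤ p*(r*t))
        (by linarith [hCS t])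
    have X : 0 ≤ r*(μ*t*‖v t‖ - 2*p*‖u t‖)^2 := mul_nonneg hr.le (sq_nonneg _)
    have Y : 0 ≤ r*(μ*t^2 - 2*p^2)*‖u t‖^2 :=
      mul_nonneg (mul_nonneg hr.le (by linarith)) (sq_nonneg _)
    have Z : 0 ≤ μ*(c*(r*‖v t‖^2)) :=
      mul_nonneg hμ.le (mul_nonneg hc0.le (mul_nonneg hr.le (sq_nonneg _)))
    have h4 : 0 ≤ μ * ((μ/4)*(r*t^2)*‖v t‖^2 + (1/2)*(r*t^2)*‖u t‖^2
        - p*(r*t)*(‖v t‖*‖u t‖) + c*(r*‖v t‖^2)) := by nlinarith [X, Y, Z]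
    have hG2 : 0 ≤ (μ/4)*(r*t^2)*‖v t‖^2 + (1/2)*(r*t^2)*‖u t‖^2
        - p*(r*t)*(‖v t‖*‖u t‖) + c*(r*‖v t‖^2) := by
      have := (mul_le_mul_iff_right₀ hμ).mp (by linarith : μ*0 ≤ μ*((μ/4)*(r*t^2)*‖v t‖^2
        + (1/2)*(r*t^2)*‖u t‖^2 - p*(r*t)*(‖v t‖*‖u t‖) + c*(r*‖v t‖^2)))
      linarith
    rw [hE]
    simp only []
    rw [hIvv, hIuu, w1, w2, hr']
    nlinarith [K1, K2, hG2]
  have hE0 : ∀ t, T ≤ t → 0 ≤ E t := by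
    intro t ht
    have htp : (0:ℝ) < t := lt_of_lt_of_le hT0 ht
    have h1 := hElow t ht
    have h2 : 0 ≤ t^p * A t := mul_nonneg (Real.rpow_nonneg htp.le _) (hA0 t)
    linarith only [h1, h2]
  -- the key differential inequality
  obtain ⟨C, hCdef⟩ : ∃ C : ℝ, C = max (c*(p-2)) 0 := ⟨_, rfl⟩
  have hC2 : 0 ≤ C := by rw [hCdef]; exact le_max_right _ _
  have hC1 : c*(p-2) ≤ C := by rw [hCdef]; exact le_max_left _ _
  obtain ⟨K, hK⟩ : ∃ K : ℝ, K = 4*C/μ := ⟨_, rfl⟩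
  have hK0 : 0 ≤ K := by rw [hK]; exact div_nonneg (by linarith) hμ.le
  have hDkey : ∀ t, T ≤ t → D t * t^3 ≤ K * E t := by
    intro t ht
    have htp : (0:ℝ) < t := lt_of_lt_of_le hT0 ht
    have hw : t ^ (p-3) * t^3 = t ^ p := by
      rw [← Real.rpow_natCast t 3, ← Real.rpow_add htp]
      norm_num
    have htpnn : (0:ℝ) ≤ t ^ p := (Real.rpow_pos_of_pos htp p).le
    have h1 : p * t^(p-1) * (A t - ⟪G t, v t⟫) ≤ 0 :=
      mul_nonpos_of_nonneg_of_nonpos (mul_nonneg hp0.le (Real.rpow_nonneg htp.le _))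
        (by linarith [hgrad t])
    have step1 : D t * t^3 = p * t^(p-1) * (A t - ⟪G t, v t⟫) * t^3
        + (c*(p-2)) * (t^p * ‖v t‖^2) := by
      rw [hD]
      simp only []
      rw [hIvv, ← hw]
      ring
    have step2 : (c*(p-2)) * (t^p * ‖v t‖^2) ≤ C * (t^p * ‖v t‖^2) :=
      mul_le_mul_of_nonneg_right hC1 (mul_nonneg (Real.rpow_nonneg htp.le _) (sq_nonneg _))
    have step3 : C * (t^p * ‖v t‖^2) ≤ C * (t^p * (2/μ * A t)) := by
      apply mul_le_mul_of_nonneg_left _ hC2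
      exact mul_le_mul_of_nonneg_left (hA2' t) htpnn
    have step4 : C * (t^p * (2/μ * A t)) = (2/μ*C) * (t^p * A t) := by ring
    have step5 : (2/μ*C) * (t^p * A t) ≤ (2/μ*C) * (2 * E t) := by
      apply mul_le_mul_of_nonneg_left _ (mul_nonneg (div_nonneg (by norm_num) hμ.le) hC2)
      linarith only [hElow t ht]
    have step6 : (2/μ*C) * (2 * E t) = K * E t := by rw [hK]; ring
    have h1t : p * t^(p-1) * (A t - ⟪G t, v t⟫) * t^3 ≤ 0 :=
      mul_nonpos_of_nonpos_of_nonneg h1 (pow_nonneg htp.le 3)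
    calc D t * t^3 = p * t^(p-1) * (A t - ⟪G t, v t⟫) * t^3
          + (c*(p-2)) * (t^p * ‖v t‖^2) := step1
      _ ≤ 0 + C * (t^p * ‖v t‖^2) := add_le_add h1t step2
      _ ≤ K * E t := by rw [zero_add]; linarith only [step3, step4, step5, step6]
  -- the auxiliary function F and its monotonicity
  obtain ⟨F, hF⟩ : ∃ F : ℝ → ℝ, F = fun s => E s * Real.exp (K/(2*s^2)) := ⟨_, rfl⟩
  have hFderiv : ∀ t, t₀ ≤ t → HasDerivAt F
      (D t * Real.exp (K/(2*t^2)) + E t * (Real.exp (K/(2*t^2)) * (-(K/t^3)))) t := by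
    intro t ht
    have htp : (0:ℝ) < t := lt_of_lt_of_le ht₀ ht
    have hg : HasDerivAt (fun s:ℝ => K/(2*s^2)) (-(K/t^3)) t := by
      have h1 : HasDerivAt (fun s:ℝ => 2*s^2) (2*(2*t)) t := by
        simpa using (hasDerivAt_pow 2 t).const_mul 2
      have h2 := (hasDerivAt_const t K).div h1 (ne_of_gt (by nlinarith [pow_pos htp 2]))
      convert h2 using 1
      rotate_right
      field_simp
      ring
      all_goals rfl
    rw [hF]
    exact (hEderiv t ht).mul hg.exp
  have hFnonpos : ∀ t, T ≤ t →
      D t * Real.exp (K/(2*t^2)) + E t * (Real.exp (K/(2*t^2)) * (-(K/t^3))) ≤ 0 := by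
    intro t ht
    have htp : (0:ℝ) < t := lt_of_lt_of_le hT0 ht
    have hkey := hDkey t ht
    have hcube : (0:ℝ) < t^3 := pow_pos htp 3
    have hdd : D t ≤ K * E t / t^3 := by
      rw [le_div_iff₀ hcube]; exact hkey
    have hex : (0:ℝ) < Real.exp (K/(2*t^2)) := Real.exp_pos _
    have : D t * Real.exp (K/(2*t^2)) + E t * (Real.exp (K/(2*t^2)) * (-(K/t^3)))
        = (D t - K * E t / t^3) * Real.exp (K/(2*t^2)) := by
      field_simp
      ring
    rw [this]
    exact mul_nonpos_of_nonpos_of_nonneg (by linarith) hex.le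
  have hFanti : AntitoneOn F (Set.Ici T) := by
    apply antitoneOn_of_deriv_nonpos (convex_Ici T)
    · intro s hs
      exact (hFderiv s (le_trans hTt₀ hs)).continuousAt.continuousWithinAt
    · rw [interior_Ici]
      intro s hs
      exact (hFderiv s (le_trans hTt₀ (le_of_lt hs))).differentiableAt.differentiableWithinAt
    · rw [interior_Ici]
      intro s hs
      rw [(hFderiv s (le_trans hTt₀ (le_of_lt hs))).deriv]
      exact hFnonpos s (le_of_lt hs)
  have hEF : ∀ t, T ≤ t → E t ≤ F T := by
    intro t ht
    have htp : (0:ℝ) < t := lt_of_lt_of_le hT0 ht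
    have h1 : E t ≤ F t := by
      rw [hF]
      exact le_mul_of_one_le_right (hE0 t ht) (Real.one_le_exp (div_nonneg hK0 (by positivity)))
    exact le_trans h1 (hFanti (Set.self_mem_Ici) (Set.mem_Ici.mpr ht) ht)
  have hFT0 : 0 ≤ F T := by
    rw [hF]; exact mul_nonneg (hE0 T le_rfl) (Real.exp_pos _).le
  have htpA : ∀ t, T ≤ t → t^p * A t ≤ 2 * F T := by
    intro t ht
    linarith only [hElow t ht, hEF t ht]
  -- compact-interval bound for t^p * A t
  have hAcont : Continuous A := by
    rw [hA]
    exact (hΦd.continuous.comp hx1.continuous).sub continuous_const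
  have hrpcont : ContinuousOn (fun s : ℝ => s ^ p) (Set.Icc t₀ T) := by
    intro s hs
    have hs0 : s ≠ 0 := (lt_of_lt_of_le ht₀ hs.1).ne'
    exact (Real.continuousAt_rpow_const s p (Or.inl hs0)).continuousWithinAt
  obtain ⟨C₂, hC₂⟩ := isCompact_Icc.exists_bound_of_continuousOn
    (hrpcont.mul hAcont.continuousOn)
  obtain ⟨B, hB⟩ : ∃ B : ℝ, B = max (2 * F T) C₂ := ⟨_, rfl⟩
  have hM1 : ∀ t, t₀ ≤ t → t^p * A t ≤ B := by
    intro t ht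
    rcases le_or_gt T t with h | h
    · exact le_trans (htpA t h) (hB ▸ le_max_left _ _)
    · have hmem : t ∈ Set.Icc t₀ T := ⟨ht, h.le⟩
      have h5 := hC₂ t hmem
      calc t^p * A t ≤ |t^p * A t| := le_abs_self _
        _ ≤ C₂ := by rw [← Real.norm_eq_abs]; exact h5
        _ ≤ B := hB ▸ le_max_right _ _
  have hB0 : 0 ≤ B := by
    have h1 := hM1 t₀ le_rfl
    have h2 : 0 ≤ t₀^p * A t₀ := mul_nonneg (Real.rpow_nonneg ht₀.le _) (hA0 t₀)
    linarith only [h1, h2]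
  -- item (i)
  have item1 : ∀ t, t₀ ≤ t → A t ≤ B / t ^ p := by
    intro t ht
    have htp : (0:ℝ) < t := lt_of_lt_of_le ht₀ ht
    rw [le_div_iff₀ (Real.rpow_pos_of_pos htp p)]
    linarith only [hM1 t ht]
  -- item (ii)
  obtain ⟨M₂, hM₂⟩ : ∃ M₂ : ℝ, M₂ = 2/μ * B := ⟨_, rfl⟩
  have hM₂0 : 0 ≤ M₂ := by
    rw [hM₂]; exact mul_nonneg (div_nonneg (by norm_num) hμ.le) hB0
  have item2 : ∀ t, t₀ ≤ t → ‖v t‖^2 ≤ M₂ / t ^ p := by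
    intro t ht
    have htp : (0:ℝ) < t := lt_of_lt_of_le ht₀ ht
    calc ‖v t‖^2 ≤ 2/μ * A t := hA2' t
      _ ≤ 2/μ * (B / t^p) := by
          apply mul_le_mul_of_nonneg_left (item1 t ht) (div_nonneg (by norm_num) hμ.le)
      _ = M₂ / t^p := by rw [hM₂]; ring
  -- convergence
  have hconv : Filter.Tendsto x Filter.atTop (nhds xstar) := by
    have hrp : Filter.Tendsto (fun t:ℝ => M₂ / t^p) Filter.atTop (nhds 0) :=
      Filter.Tendsto.div_atTop tendsto_const_nhds (tendsto_rpow_atTop hp0)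
    have hnorm2 : Filter.Tendsto (fun t => ‖v t‖^2) Filter.atTop (nhds 0) := by
      apply squeeze_zero' (Filter.Eventually.of_forall (fun t => by positivity))
        _ hrp
      filter_upwards [Filter.eventually_ge_atTop t₀] with t ht
      exact item2 t ht
    have hnorm : Filter.Tendsto (fun t => ‖v t‖) Filter.atTop (nhds 0) := by
      have hsq := (Real.continuous_sqrt.tendsto 0).comp hnorm2
      simp only [Function.comp_def, Real.sqrt_zero] at hsq
      convert hsq using 2 with t
      rw [Real.sqrt_sq (norm_nonneg _)]
    rw [tendsto_iff_norm_sub_tendsto_zero]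
    convert hnorm using 2 with t
    rw [hveq]
  -- item (iii) : velocity bound
  have hvel1 : ∀ t, T ≤ t → t^p * ‖u t‖^2 ≤ 4 * F T + 4*p^2*(M₂/t₀^2) := by
    intro t ht
    have htp : (0:ℝ) < t := lt_of_lt_of_le hT0 ht
    have ht₀t : t₀ ≤ t := le_trans hTt₀ ht
    obtain ⟨r, hr'⟩ : ∃ r : ℝ, r = t ^ (p-2) := ⟨_, rfl⟩
    have hr : 0 < r := hr' ▸ Real.rpow_pos_of_pos htp _
    have w2 : t ^ (p-1) = r * t := by
      rw [hr', show p-1 = p-2 - (-1) from by ring, Real.rpow_sub htp, Real.rpow_neg_one]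
      field_simp
    have w1 : t ^ p = r * t * t := by
      rw [show p = p-1 - (-1) from by ring, Real.rpow_sub htp, Real.rpow_neg_one, w2]
      field_simp
    have ha : 0 ≤ ‖v t‖ := norm_nonneg _
    have hb : 0 ≤ ‖u t‖ := norm_nonneg _
    have hEineq : E t ≤ F T := hEF t ht
    have hEexp : E t = (r*t*t) * A t + (1/2) * ((r*t*t) * ‖u t‖^2)
        + p * ((r*t) * ⟪v t, u t⟫) + c * (r * ‖v t‖^2) := by
      rw [hE]
      simp only []
      rw [hIvv, hIuu, w1, w2, hr']
    have hAnn : 0 ≤ (r*t*t) * A t :=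
      mul_nonneg (mul_nonneg (mul_nonneg hr.le htp.le) htp.le) (hA0 t)
    have hcnn : 0 ≤ c * (r * ‖v t‖^2) :=
      mul_nonneg hc0.le (mul_nonneg hr.le (sq_nonneg _))
    have hq : r * ‖v t‖^2 * t₀^2 ≤ M₂ := by
      have hts : t₀^2 ≤ t^2 := by nlinarith [ht₀t, ht₀]
      have h1 : r * ‖v t‖^2 * t₀^2 ≤ r * ‖v t‖^2 * t^2 := by
        have := mul_le_mul_of_nonneg_left hts (mul_nonneg hr.le (sq_nonneg ‖v t‖))
        linarith only [this]
      have h2 : (r*t*t) * ‖v t‖^2 ≤ M₂ := by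
        have hi := item2 t ht₀t
        rw [le_div_iff₀ (Real.rpow_pos_of_pos htp p)] at hi
        nlinarith [hi]
      nlinarith
    have hX2 : 0 ≤ r * (t*‖u t‖ - 2*p*‖v t‖)^2 := mul_nonneg hr.le (sq_nonneg _)
    have hcross : -(‖v t‖*‖u t‖) ≤ ⟪v t, u t⟫ := hCS t
    have ht₀2 : 0 < t₀^2 := pow_pos ht₀ 2
    have hqq : r * ‖v t‖^2 ≤ M₂ / t₀^2 := by
      rw [le_div_iff₀ ht₀2]; exact hq
    rw [w1]
    have hprt : (0:ℝ) ≤ p*(r*t) := mul_nonneg hp0.le (mul_nonneg hr.le htp.le)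
    have hpm := mul_le_mul_of_nonneg_left hqq (sq_nonneg p)
    have hcm := mul_le_mul_of_nonneg_left hcross hprt
    linarith only [hEexp, hEineq, hAnn, hcnn, hX2, hpm, hcm]
  -- compact bound for velocity
  obtain ⟨C₄, hC₄⟩ := isCompact_Icc.exists_bound_of_continuousOn
    (hrpcont.mul ((hdx.continuous.norm.pow 2).continuousOn))
  obtain ⟨B₅, hB₅⟩ : ∃ B₅ : ℝ, B₅ = max (4 * F T + 4*p^2*(M₂/t₀^2)) C₄ := ⟨_, rfl⟩
  have hvel2 : ∀ t, t₀ ≤ t → t^p * ‖u t‖^2 ≤ B₅ := by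
    intro t ht
    rcases le_or_gt T t with h | h
    · exact le_trans (hvel1 t h) (hB₅ ▸ le_max_left _ _)
    · have hmem : t ∈ Set.Icc t₀ T := ⟨ht, h.le⟩
      have h5 := hC₄ t hmem
      rw [← hu] at h5
      calc t^p * ‖u t‖^2 ≤ |t^p * ‖u t‖^2| := le_abs_self _
        _ ≤ C₄ := by rw [← Real.norm_eq_abs]; exact h5
        _ ≤ B₅ := hB₅ ▸ le_max_right _ _
  have hB₅0 : 0 ≤ B₅ := by
    have h1 := hvel2 t₀ le_rfl
    have h2 : 0 ≤ t₀^p * ‖u t₀‖^2 := mul_nonneg (Real.rpow_nonneg ht₀.le _) (sq_nonneg _)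
    linarith only [h1, h2]
  have item3 : ∀ t, t₀ ≤ t → ‖u t‖ ≤ Real.sqrt B₅ / t ^ (α/3) := by
    intro t ht
    have htp : (0:ℝ) < t := lt_of_lt_of_le ht₀ ht
    have hex : (0:ℝ) < t ^ (α/3) := Real.rpow_pos_of_pos htp _
    rw [le_div_iff₀ hex]
    have hnn : 0 ≤ ‖u t‖ * t ^ (α/3) := mul_nonneg (norm_nonneg _) hex.le
    apply (Real.le_sqrt hnn hB₅0).mpr
    have hsq : (t ^ (α/3))^2 = t ^ p := by
      rw [← Real.rpow_natCast (t ^ (α/3)) 2, ← Real.rpow_mul htp.le]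
      rw [show α/3 * (2:ℕ) = p from by push_cast; rw [hp]; ring]
    rw [mul_pow, hsq]
    calc ‖u t‖^2 * t^p = t^p * ‖u t‖^2 := by ring
      _ ≤ B₅ := hvel2 t ht
  refine ⟨hconv, ⟨B, hB0, fun t ht => ?_⟩, ⟨M₂, hM₂0, fun t ht => ?_⟩,
    ⟨Real.sqrt B₅, Real.sqrt_nonneg _, fun t ht => ?_⟩⟩
  · rw [← hp]
    have h := item1 t ht
    rw [hA] at h
    simpa using h
  · rw [hveq t, ← hp]
    exact item2 t ht
  · rw [← hu]
    exact item3 t ht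
end
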